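/- arXiv:2004.12355 — 4 statements merged into one kernel-verified Lean document; each statement's English description precedes it below -/
import Mathlib

section
/- Let U be a nonnegative random variable and let κ > 0, C > 0. If P(U > t) ≍ C t^{−κ} as t → ∞, then E[U^κ 1{U ≤ t}] ≍ κ C ln t as t → ∞. Consequently, if moreover U is the unique-in-law solution of U =_d A U + B (with U independent of (A,B)) satisfying E[U^κ 1{U ≤ t}] ≍ (E[(AU+B)^κ − (AU)^κ]/E[A^κ ln A]) ln t, then C = E[(AU+B)^κ − (AU)^κ]/(κ E[A^κ ln A]). -/
open MeasureTheory ProbabilityTheory Filter Topology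


private lemma kesten_numeric_up {x C ε : ℝ} (hC : 0 < C) (hε : 0 < ε) (hx0 : 0 < x)
    (hx14 : x ≤ 1/4) (hxε : x ≤ ε/4) :
    Real.exp x * (C - Real.exp (-x) * C) * (C * x)⁻¹ < 1 + ε := by
  have hE0 : 0 < Real.exp x := Real.exp_pos x
  have hEF : Real.exp x * Real.exp (-x) = 1 := by
    rw [← Real.exp_add]; simp
  have h1x : 1 - x ≤ Real.exp (-x) := by
    have := Real.add_one_le_exp (-x); linarith
  have hA : Real.exp x - x * Real.exp x ≤ 1 := by
    have := mul_le_mul_of_nonneg_right h1x hE0.le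
    nlinarith [hEF]
  have hE43 : Real.exp x ≤ 4/3 := by nlinarith
  have h5 : Real.exp x - 1 ≤ x * Real.exp x := by linarith
  have h6 : x * Real.exp x ≤ x * (4/3) := by nlinarith
  have h7 : x * (Real.exp x - 1) ≤ x * (x * (4/3)) := by nlinarith
  have hkey : Real.exp x - 1 < (1 + ε) * x := by nlinarith [mul_le_mul_of_nonneg_left hxε hx0.le]
  have hnum : Real.exp x * (C - Real.exp (-x) * C) = C * (Real.exp x - 1) := by
    nlinarith [hEF]
  rw [hnum, ← div_eq_mul_inv, div_lt_iff₀ (by positivity)]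
  nlinarith

private lemma kesten_numeric_lo {x C ε : ℝ} (hC : 0 < C) (hε : 0 < ε) (hx0 : 0 < x)
    (hx14 : x ≤ 1/4) (hxε : x ≤ ε/4) :
    1 - ε < (C - Real.exp (-x) * C) * (C * x)⁻¹ := by
  have hF0 : 0 < Real.exp (-x) := Real.exp_pos _
  have hEF : Real.exp x * Real.exp (-x) = 1 := by
    rw [← Real.exp_add]; simp
  have h1x : 1 - x ≤ Real.exp (-x) := by
    have := Real.add_one_le_exp (-x); linarith
  have hB : (1 + x) * Real.exp (-x) ≤ 1 := by
    have := mul_le_mul_of_nonneg_right (Real.add_one_le_exp x) hF0.le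
    nlinarith [hEF]
  have hkey : (1 - ε) * x < 1 - Real.exp (-x) := by nlinarith
  rw [← div_eq_mul_inv, lt_div_iff₀ (by positivity)]
  nlinarith


private lemma kesten_tele_low (g G : ℝ → ℝ) (κ δ : ℝ) (hδ : 0 ≤ δ)
    (key : ∀ s t : ℝ, 1 ≤ s → s ≤ t → s ^ κ * (G s - G t) ≤ g t - g s) :
    ∀ m : ℕ, g 1 + ∑ k ∈ Finset.range m,
      Real.exp (k * δ) ^ κ * (G (Real.exp (k * δ)) - G (Real.exp ((k + 1) * δ)))
      ≤ g (Real.exp (m * δ)) := by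
  intro m
  induction m with
  | zero => simp
  | succ m ih =>
    have h := key (Real.exp (m * δ)) (Real.exp ((m + 1) * δ))
      (Real.one_le_exp (by positivity))
      (Real.exp_le_exp.mpr (by nlinarith [Nat.cast_nonneg (α := ℝ) m]))
    rw [Finset.sum_range_succ]
    push_cast at ih h ⊢
    linarith

private lemma kesten_tele_up (g G : ℝ → ℝ) (κ δ : ℝ) (hδ : 0 ≤ δ)
    (key : ∀ s t : ℝ, 1 ≤ s → s ≤ t → g t - g s ≤ t ^ κ * (G s - G t)) :
    ∀ m : ℕ, g (Real.exp (m * δ)) ≤ g 1 + ∑ k ∈ Finset.range m,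
      Real.exp ((k + 1) * δ) ^ κ * (G (Real.exp (k * δ)) - G (Real.exp ((k + 1) * δ))) := by
  intro m
  induction m with
  | zero => simp
  | succ m ih =>
    have h := key (Real.exp (m * δ)) (Real.exp ((m + 1) * δ))
      (Real.one_le_exp (by positivity))
      (Real.exp_le_exp.mpr (by nlinarith [Nat.cast_nonneg (α := ℝ) m]))
    rw [Finset.sum_range_succ]
    push_cast at ih h ⊢
    linarith


private lemma kesten_integrable
    {Ω : Type*} [MeasurableSpace Ω] (μ : Measure Ω) [IsProbabilityMeasure μ]
    (U : Ω → ℝ) (κ : ℝ) (hU : Measurable U) (hU0 : ∀ ω, 0 ≤ U ω) (hκ : 0 < κ)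
    {t : ℝ} (ht : 0 ≤ t) :
    Integrable (fun ω => if U ω ≤ t then U ω ^ κ else 0) μ := by
  have hmeasκ : Measurable fun ω => U ω ^ κ :=
    (Real.continuous_rpow_const hκ.le).measurable.comp hU
  refine Integrable.mono' (integrable_const (t ^ κ))
    ((hmeasκ.ite (hU measurableSet_Iic) measurable_const)).aestronglyMeasurable
    (Filter.Eventually.of_forall fun ω => ?_)
  rw [Real.norm_eq_abs, abs_of_nonneg]
  · split_ifs with h
    · exact Real.rpow_le_rpow (hU0 ω) h hκ.le
    · exact Real.rpow_nonneg ht κ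
  · split_ifs with h
    · exact Real.rpow_nonneg (hU0 ω) κ
    · exact le_refl 0

private lemma kesten_sandwich
    {Ω : Type*} [MeasurableSpace Ω] (μ : Measure Ω) [IsProbabilityMeasure μ]
    (U : Ω → ℝ) (κ : ℝ) (hU : Measurable U) (hU0 : ∀ ω, 0 ≤ U ω) (hκ : 0 < κ)
    {s t : ℝ} (hs : 0 ≤ s) (hst : s ≤ t) :
    s ^ κ * ((μ {ω | s < U ω}).toReal - (μ {ω | t < U ω}).toReal)
      ≤ (∫ ω, (if U ω ≤ t then U ω ^ κ else 0) ∂μ)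
        - (∫ ω, (if U ω ≤ s then U ω ^ κ else 0) ∂μ) ∧
    (∫ ω, (if U ω ≤ t then U ω ^ κ else 0) ∂μ)
        - (∫ ω, (if U ω ≤ s then U ω ^ κ else 0) ∂μ)
      ≤ t ^ κ * ((μ {ω | s < U ω}).toReal - (μ {ω | t < U ω}).toReal) := by
  set E : Set Ω := U ⁻¹' Set.Ioc s t with hE
  have hEm : MeasurableSet E := hU measurableSet_Ioc
  have hdisj : Disjoint {ω | t < U ω} E := Set.disjoint_left.mpr
    fun ω (h1 : t < U ω) (h2 : ω ∈ E) => absurd (Set.mem_Ioc.mp h2).2 (not_le.mpr h1)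
  have hsplit : μ {ω | s < U ω} = μ {ω | t < U ω} + μ E := by
    rw [← measure_union hdisj hEm]
    congr 1
    ext ω
    simp only [Set.mem_setOf_eq, Set.mem_union, Set.mem_preimage, Set.mem_Ioc]
    constructor
    · intro h
      by_cases h2 : U ω ≤ t
      · exact Or.inr ⟨h, h2⟩
      · exact Or.inl (lt_of_not_ge h2)
    · rintro (h | ⟨h, _⟩)
      · exact hst.trans_lt h
      · exact h
  have hGE : (μ {ω | s < U ω}).toReal - (μ {ω | t < U ω}).toReal = (μ E).toReal := by
    rw [hsplit, ENNReal.toReal_add (measure_ne_top μ _) (measure_ne_top μ _)]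
    ring
  have hdiffeq : (fun ω => (if U ω ≤ t then U ω ^ κ else 0)
        - (if U ω ≤ s then U ω ^ κ else 0))
      = fun ω => E.indicator (fun ω => U ω ^ κ) ω := by
    funext ω
    by_cases h1 : U ω ≤ s
    · have h2 : U ω ≤ t := h1.trans hst
      have hni : ω ∉ E := fun hmem => absurd (Set.mem_Ioc.mp hmem).1 (not_lt.mpr h1)
      rw [if_pos h1, if_pos h2, Set.indicator_of_notMem hni, sub_self]
    · by_cases h2 : U ω ≤ t
      · have hmem : ω ∈ E := Set.mem_Ioc.mpr ⟨lt_of_not_ge h1, h2⟩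
        rw [if_pos h2, if_neg h1, Set.indicator_of_mem hmem, sub_zero]
      · have hni : ω ∉ E := fun hmem => absurd (Set.mem_Ioc.mp hmem).2 h2
        rw [if_neg h1, if_neg h2, Set.indicator_of_notMem hni, sub_self]
  have hIs := kesten_integrable μ U κ hU hU0 hκ hs
  have hIt := kesten_integrable μ U κ hU hU0 hκ (hs.trans hst)
  have hindInt : Integrable (fun ω => E.indicator (fun ω => U ω ^ κ) ω) μ := by
    rw [← hdiffeq]; exact hIt.sub hIs
  have hgdiff : (∫ ω, (if U ω ≤ t then U ω ^ κ else 0) ∂μ)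
      - (∫ ω, (if U ω ≤ s then U ω ^ κ else 0) ∂μ)
      = ∫ ω, E.indicator (fun ω => U ω ^ κ) ω ∂μ := by
    rw [← integral_sub hIt hIs, hdiffeq]
  rw [hgdiff, hGE]
  constructor
  · calc s ^ κ * (μ E).toReal = ∫ ω, E.indicator (fun _ => s ^ κ) ω ∂μ := by
          rw [integral_indicator_const _ hEm, smul_eq_mul, mul_comm]; rfl
      _ ≤ _ := by
          refine integral_mono ((integrable_const _).indicator hEm) hindInt fun ω => ?_
          by_cases h : ω ∈ E
          · rw [Set.indicator_of_mem h, Set.indicator_of_mem h]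
            exact Real.rpow_le_rpow hs (le_of_lt (Set.mem_Ioc.mp h).1) hκ.le
          · rw [Set.indicator_of_notMem h, Set.indicator_of_notMem h]
  · calc (∫ ω, E.indicator (fun ω => U ω ^ κ) ω ∂μ)
        ≤ ∫ ω, E.indicator (fun _ => t ^ κ) ω ∂μ := by
          refine integral_mono hindInt ((integrable_const _).indicator hEm) fun ω => ?_
          by_cases h : ω ∈ E
          · rw [Set.indicator_of_mem h, Set.indicator_of_mem h]
            exact Real.rpow_le_rpow (hU0 ω) (Set.mem_Ioc.mp h).2 hκ.le
          · rw [Set.indicator_of_notMem h, Set.indicator_of_notMem h]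
      _ = t ^ κ * (μ E).toReal := by
          rw [integral_indicator_const _ hEm, smul_eq_mul, mul_comm]; rfl

private lemma kesten_limit (g G : ℝ → ℝ) (κ C : ℝ) (hκ : 0 < κ) (hC : 0 < C)
    (hg0 : ∀ t, 0 ≤ g t)
    (hgmono : ∀ s t : ℝ, 1 ≤ s → s ≤ t → g s ≤ g t)
    (hGanti : ∀ s t : ℝ, 1 ≤ s → s ≤ t → G t ≤ G s)
    (key_low : ∀ s t : ℝ, 1 ≤ s → s ≤ t → s ^ κ * (G s - G t) ≤ g t - g s)
    (key_up : ∀ s t : ℝ, 1 ≤ s → s ≤ t → g t - g s ≤ t ^ κ * (G s - G t))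
    (htail : Filter.Tendsto (fun t => G t / (C * t ^ (-κ))) atTop (nhds 1)) :
    Filter.Tendsto (fun t => g t / (κ * C * Real.log t)) atTop (nhds 1) := by
  rw [Metric.tendsto_nhds]
  intro ε hε
  set δ : ℝ := min ε 1 / (4 * κ) with hδdef
  have hδ0 : 0 < δ := div_pos (lt_min hε one_pos) (by positivity)
  have hκδ : κ * δ = min ε 1 / 4 := by rw [hδdef]; field_simp
  have hx0 : 0 < κ * δ := by positivity
  have hx14 : κ * δ ≤ 1/4 := by rw [hκδ]; have := min_le_right ε 1; linarith
  have hxε : κ * δ ≤ ε/4 := by rw [hκδ]; have := min_le_left ε 1; linarith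
  clear_value δ
  -- transformed tail limit
  have htail' : Tendsto (fun t => t ^ κ * G t) atTop (𝓝 C) := by
    have h := htail.mul_const C
    rw [one_mul] at h
    refine h.congr' ?_
    filter_upwards [eventually_gt_atTop (0:ℝ)] with t ht
    have htκ : (0:ℝ) < t ^ κ := Real.rpow_pos_of_pos ht κ
    rw [Real.rpow_neg ht.le]
    field_simp
  have hcomp : Tendsto (fun k : ℕ => Real.exp (k * δ)) atTop atTop :=
    Real.tendsto_exp_atTop.comp (Tendsto.atTop_mul_const hδ0 tendsto_natCast_atTop_atTop)
  have hb : Tendsto (fun k : ℕ => Real.exp (k * δ) ^ κ * G (Real.exp (k * δ))) atTop (𝓝 C) :=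
    htail'.comp hcomp
  have hb1 : Tendsto (fun k : ℕ => Real.exp (((k:ℝ)+1) * δ) ^ κ * G (Real.exp (((k:ℝ)+1) * δ)))
      atTop (𝓝 C) := by
    have h := hb.comp (tendsto_add_atTop_nat 1)
    refine h.congr fun k => ?_
    simp only [Function.comp_apply]
    push_cast
    rfl
  have hc : Tendsto (fun k : ℕ => Real.exp ((k:ℝ) * δ) ^ κ * G (Real.exp (((k:ℝ)+1) * δ))) atTop
      (𝓝 (Real.exp (-(κ * δ)) * C)) := by
    have h2 := hb1.const_mul (Real.exp (-(κ * δ)))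
    refine h2.congr fun k => ?_
    rw [← Real.exp_mul, ← Real.exp_mul, ← mul_assoc, ← Real.exp_add]
    congr 2
    ring
  set L : ℝ := C - Real.exp (-(κ * δ)) * C with hLdef
  have haLim : Tendsto (fun k : ℕ => Real.exp ((k:ℝ) * δ) ^ κ *
      (G (Real.exp ((k:ℝ) * δ)) - G (Real.exp (((k:ℝ)+1) * δ)))) atTop (𝓝 L) := by
    refine (hb.sub hc).congr fun k => ?_
    ring
  set S : ℕ → ℝ := fun m => ∑ k ∈ Finset.range m, Real.exp ((k:ℝ) * δ) ^ κ *
      (G (Real.exp ((k:ℝ) * δ)) - G (Real.exp (((k:ℝ)+1) * δ))) with hSdef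
  have hCes : Tendsto (fun n : ℕ => ((n:ℝ))⁻¹ * S n) atTop (𝓝 L) := haLim.cesaro
  have hone_le : ∀ k : ℕ, (1:ℝ) ≤ Real.exp ((k:ℝ) * δ) :=
    fun k => Real.one_le_exp (by positivity)
  have hmono_exp : ∀ k : ℕ, Real.exp ((k:ℝ) * δ) ≤ Real.exp (((k:ℝ)+1) * δ) :=
    fun k => Real.exp_le_exp.mpr (by nlinarith [hδ0, Nat.cast_nonneg (α := ℝ) k])
  have hS0 : ∀ m : ℕ, 0 ≤ S m := by
    intro m
    rw [hSdef]
    refine Finset.sum_nonneg fun k _ => mul_nonneg (by positivity) ?_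
    have := hGanti _ _ (hone_le k) (hmono_exp k)
    linarith
  have tlow : ∀ m : ℕ, g 1 + S m ≤ g (Real.exp ((m:ℝ) * δ)) :=
    kesten_tele_low g G κ δ hδ0.le key_low
  have tup' : ∀ m : ℕ, g (Real.exp ((m:ℝ) * δ)) ≤ g 1 + Real.exp (κ * δ) * S m := by
    intro m
    refine (kesten_tele_up g G κ δ hδ0.le key_up m).trans ?_
    have heq : ∑ k ∈ Finset.range m, Real.exp (((k:ℝ)+1) * δ) ^ κ *
        (G (Real.exp ((k:ℝ) * δ)) - G (Real.exp (((k:ℝ)+1) * δ)))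
        = Real.exp (κ * δ) * S m := by
      rw [hSdef, Finset.mul_sum]
      refine Finset.sum_congr rfl fun k _ => ?_
      rw [← Real.exp_mul, ← Real.exp_mul, ← mul_assoc, ← Real.exp_add]
      congr 2
      ring
    rw [← heq]
  clear_value S
  set u : ℕ → ℝ := fun n => (g 1 * ((n:ℝ))⁻¹ + Real.exp (κ*δ) * (((n:ℝ))⁻¹ * S (n+1))) * (κ*C*δ)⁻¹
    with hudef
  set l : ℕ → ℝ := fun n => ((n:ℝ) / ((n:ℝ)+1)) * (((n:ℝ))⁻¹ * S n) * (κ*C*δ)⁻¹ with hldef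
  have hinv1 : Tendsto (fun n : ℕ => ((n:ℝ)+1)⁻¹) atTop (𝓝 0) := by
    have h := (tendsto_inv_atTop_nhds_zero_nat (𝕜 := ℝ)).comp (tendsto_add_atTop_nat 1)
    refine h.congr fun n => ?_
    simp only [Function.comp_apply]
    push_cast
    rfl
  have hq1 : Tendsto (fun n : ℕ => ((n:ℝ)+1) / n) atTop (𝓝 1) := by
    have h : Tendsto (fun n : ℕ => 1 + ((n:ℝ))⁻¹) atTop (𝓝 (1+0)) :=
      tendsto_const_nhds.add tendsto_inv_atTop_nhds_zero_nat
    rw [add_zero] at h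
    refine h.congr' ?_
    filter_upwards [eventually_ge_atTop 1] with n hn
    have hn0 : (n:ℝ) ≠ 0 := Nat.cast_ne_zero.mpr (by omega)
    field_simp
  have hq2 : Tendsto (fun n : ℕ => (n:ℝ) / ((n:ℝ)+1)) atTop (𝓝 1) := by
    have h : Tendsto (fun n : ℕ => 1 - ((n:ℝ)+1)⁻¹) atTop (𝓝 (1 - 0)) :=
      tendsto_const_nhds.sub hinv1
    rw [sub_zero] at h
    refine h.congr fun n => ?_
    have hn1 : ((n:ℝ)+1) ≠ 0 := by positivity
    field_simp
    ring
  have hS1 : Tendsto (fun n : ℕ => ((n:ℝ))⁻¹ * S (n+1)) atTop (𝓝 L) := by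
    have h0 : Tendsto (fun n : ℕ => ((n:ℝ)+1)⁻¹ * S (n+1)) atTop (𝓝 L) := by
      have h := hCes.comp (tendsto_add_atTop_nat 1)
      refine h.congr fun n => ?_
      simp only [Function.comp_apply]
      push_cast
      rfl
    have h := hq1.mul h0
    rw [one_mul] at h
    refine h.congr' ?_
    filter_upwards [eventually_ge_atTop 1] with n hn
    have hn0 : (n:ℝ) ≠ 0 := Nat.cast_ne_zero.mpr (by omega)
    have hn1 : ((n:ℝ)+1) ≠ 0 := by positivity
    field_simp
  have hu : Tendsto u atTop (𝓝 ((g 1 * 0 + Real.exp (κ*δ) * L) * (κ*C*δ)⁻¹)) :=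
    ((tendsto_inv_atTop_nhds_zero_nat.const_mul (g 1)).add
      (hS1.const_mul (Real.exp (κ*δ)))).mul_const _
  have hl : Tendsto l atTop (𝓝 (1 * L * (κ*C*δ)⁻¹)) := (hq2.mul hCes).mul_const _
  clear_value u l
  have hCx : κ * C * δ = C * (κ * δ) := by ring
  have hub : (g 1 * 0 + Real.exp (κ*δ) * L) * (κ*C*δ)⁻¹ < 1 + ε := by
    rw [mul_zero, zero_add, hCx, hLdef]
    exact kesten_numeric_up hC hε hx0 hx14 hxε
  have hlb : 1 - ε < 1 * L * (κ*C*δ)⁻¹ := by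
    rw [one_mul, hCx, hLdef]
    exact kesten_numeric_lo hC hε hx0 hx14 hxε
  clear_value L
  have hun : ∀ᶠ n in atTop, u n < 1 + ε := hu.eventually_lt_const hub
  have hln : ∀ᶠ n in atTop, 1 - ε < l n := hl.eventually_const_lt hlb
  obtain ⟨N, hN⟩ := eventually_atTop.mp (hun.and hln)
  filter_upwards [eventually_ge_atTop (Real.exp (((N:ℝ)+1) * δ))] with t ht
  have ht0 : 0 < t := lt_of_lt_of_le (Real.exp_pos _) ht
  have hlogt : ((N:ℝ)+1) * δ ≤ Real.log t := (Real.le_log_iff_exp_le ht0).mpr ht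
  have hlogpos : 0 < Real.log t := lt_of_lt_of_le (by positivity) hlogt
  set n : ℕ := ⌊Real.log t / δ⌋₊ with hndef
  have hfl : (n:ℝ) ≤ Real.log t / δ := Nat.floor_le (by positivity)
  have hfu : Real.log t / δ < (n:ℝ) + 1 := by
    have h := Nat.lt_succ_floor (Real.log t / δ)
    push_cast at h
    exact h
  have hnlog : (n:ℝ) * δ ≤ Real.log t := by
    rw [le_div_iff₀ hδ0] at hfl
    exact hfl
  have hlogn1 : Real.log t ≤ ((n:ℝ)+1) * δ := by
    rw [div_lt_iff₀ hδ0] at hfu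
    exact hfu.le
  have hNn : N + 1 ≤ n := by
    apply Nat.le_floor
    push_cast
    rw [le_div_iff₀ hδ0]
    exact hlogt
  have hnR : (1:ℝ) ≤ (n:ℝ) := by
    have : (1:ℕ) ≤ n := le_trans (Nat.le_add_left 1 N) hNn
    exact_mod_cast this
  have hn0 : (0:ℝ) < (n:ℝ) := lt_of_lt_of_le one_pos hnR
  have hone_le_t : 1 ≤ t := le_trans (Real.one_le_exp (by positivity)) ht
  have hg_lo : S n ≤ g t := by
    have h1 := tlow n
    have h2 : g (Real.exp ((n:ℝ) * δ)) ≤ g t := by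
      refine hgmono _ _ (hone_le n) ?_
      calc Real.exp ((n:ℝ)*δ) ≤ Real.exp (Real.log t) := Real.exp_le_exp.mpr hnlog
        _ = t := Real.exp_log ht0
    have hg1 : 0 ≤ g 1 := hg0 1
    linarith
  have hg_up : g t ≤ g 1 + Real.exp (κ*δ) * S (n+1) := by
    have h2 : g t ≤ g (Real.exp (((n:ℝ)+1) * δ)) := by
      refine hgmono _ _ hone_le_t ?_
      rw [← Real.exp_log ht0]
      exact Real.exp_le_exp.mpr hlogn1
    have h3 := tup' (n+1)
    push_cast at h3
    linarith
  have hd0 : 0 < κ * C * Real.log t := by positivity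
  have hnum0 : 0 ≤ g 1 + Real.exp (κ*δ) * S (n+1) :=
    add_nonneg (hg0 1) (mul_nonneg (Real.exp_pos _).le (hS0 (n+1)))
  have hrup : g t / (κ*C*Real.log t) ≤ u n := by
    have hd1 : 0 < κ*C*((n:ℝ)*δ) := by positivity
    have h1 : g t / (κ*C*Real.log t) ≤ (g 1 + Real.exp (κ*δ) * S (n+1)) / (κ*C*((n:ℝ)*δ)) := by
      exact div_le_div₀ hnum0 hg_up hd1
        (mul_le_mul_of_nonneg_left hnlog (mul_pos hκ hC).le)
    have h2 : (g 1 + Real.exp (κ*δ) * S (n+1)) / (κ*C*((n:ℝ)*δ)) = u n := by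
      rw [hudef]
      ring
    rw [h2] at h1
    exact h1
  have hrlo : l n ≤ g t / (κ*C*Real.log t) := by
    have hd2 : 0 < κ*C*(((n:ℝ)+1)*δ) := by positivity
    have h1 : S n / (κ*C*(((n:ℝ)+1)*δ)) ≤ g t / (κ*C*Real.log t) := by
      exact div_le_div₀ (hg0 t) hg_lo hd0
        (mul_le_mul_of_nonneg_left hlogn1 (mul_pos hκ hC).le)
    have h2 : l n = S n / (κ*C*(((n:ℝ)+1)*δ)) := by
      have hm0 : ((n:ℝ)+1) ≠ 0 := by positivity
      rw [hldef, eq_div_iff (ne_of_gt hd2)]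
      field_simp
      try ring
    rw [h2]
    exact h1
  have hNn' := hN n (le_trans (Nat.le_succ N) hNn)
  rw [Real.dist_eq, abs_sub_lt_iff]
  constructor <;> linarith only [hNn'.1, hNn'.2, hrup, hrlo]


/-- If `P(U > t) ≍ C t^{-κ}` then `E[U^κ 1{U ≤ t}] ≍ κ C ln t`; consequently, for the
solution of the stochastic recurrence equation whose truncated `κ`-th moment satisfies
`E[U^κ 1{U ≤ t}] ≍ (E[(AU+B)^κ − (AU)^κ]/E[A^κ ln A]) ln t`, the Kesten constant is
`C = E[(AU+B)^κ − (AU)^κ]/(κ E[A^κ ln A])`. -/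
theorem kesten_constant_identification
    {Ω : Type*} [MeasurableSpace Ω] (μ : Measure Ω) [IsProbabilityMeasure μ]
    (U : Ω → ℝ) (κ C : ℝ)
    (hU : Measurable U) (hU0 : ∀ ω, 0 ≤ U ω)
    (hκ : 0 < κ) (hC : 0 < C)
    (htail : Filter.Tendsto
      (fun t : ℝ => (μ {ω | t < U ω}).toReal / (C * t ^ (-κ)))
      Filter.atTop (nhds 1)) :
    Filter.Tendsto
      (fun t : ℝ =>
        (∫ ω, (if U ω ≤ t then U ω ^ κ else 0) ∂μ) / (κ * C * Real.log t))
      Filter.atTop (nhds 1) ∧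
    ∀ A B : Ω → ℝ, Measurable A → Measurable B →
      (∀ ω, 0 ≤ A ω) → (∀ ω, 0 ≤ B ω) →
      μ {ω | A ω = 1} < 1 → μ {ω | B ω = 0} < 1 →
      Integrable (fun ω => A ω ^ κ) μ → (∫ ω, A ω ^ κ ∂μ) = 1 →
      Integrable (fun ω => B ω ^ κ) μ →
      IndepFun U (fun ω => (A ω, B ω)) μ →
      Measure.map U μ = Measure.map (fun ω => A ω * U ω + B ω) μ →
      Filter.Tendsto
        (fun t : ℝ =>
          (∫ ω, (if U ω ≤ t then U ω ^ κ else 0) ∂μ) /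
            ((∫ ω, ((A ω * U ω + B ω) ^ κ - (A ω * U ω) ^ κ) ∂μ) /
              (∫ ω, A ω ^ κ * Real.log (A ω) ∂μ) * Real.log t))
        Filter.atTop (nhds 1) →
      C = (∫ ω, ((A ω * U ω + B ω) ^ κ - (A ω * U ω) ^ κ) ∂μ) /
            (κ * ∫ ω, A ω ^ κ * Real.log (A ω) ∂μ) := by
  have part1 : Filter.Tendsto
      (fun t : ℝ =>
        (∫ ω, (if U ω ≤ t then U ω ^ κ else 0) ∂μ) / (κ * C * Real.log t))
      Filter.atTop (nhds 1) := by
    refine kesten_limit (fun t => ∫ ω, (if U ω ≤ t then U ω ^ κ else 0) ∂μ)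
      (fun u => (μ {ω | u < U ω}).toReal) κ C hκ hC ?_ ?_ ?_ ?_ ?_ htail
    · intro t
      refine integral_nonneg fun ω => ?_
      dsimp only
      split_ifs
      · exact Real.rpow_nonneg (hU0 ω) κ
      · exact le_refl 0
    · intro s t hs hst
      refine integral_mono (kesten_integrable μ U κ hU hU0 hκ (by linarith))
        (kesten_integrable μ U κ hU hU0 hκ (by linarith)) fun ω => ?_
      dsimp only
      by_cases h : U ω ≤ s
      · rw [if_pos h, if_pos (h.trans hst)]
      · rw [if_neg h]
        split_ifs with h2
        · exact Real.rpow_nonneg (hU0 ω) κ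
        · exact le_refl 0
    · intro s t hs hst
      exact ENNReal.toReal_mono (measure_ne_top μ _)
        (measure_mono fun ω hω => lt_of_le_of_lt hst hω)
    · intro s t hs hst
      exact (kesten_sandwich μ U κ hU hU0 hκ (by linarith) hst).1
    · intro s t hs hst
      exact (kesten_sandwich μ U κ hU hU0 hκ (by linarith) hst).2
  refine ⟨part1, ?_⟩
  intro A B hA hB hA0 hB0 hA1 hB01 hIA hEA hIB hindep hfix hyp2
  set g : ℝ → ℝ := fun t => ∫ ω, (if U ω ≤ t then U ω ^ κ else 0) ∂μ with hgdef
  set I1 : ℝ := ∫ ω, ((A ω * U ω + B ω) ^ κ - (A ω * U ω) ^ κ) ∂μ with hI1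
  set I2 : ℝ := ∫ ω, A ω ^ κ * Real.log (A ω) ∂μ with hI2
  clear_value g I1 I2
  have part1' : Filter.Tendsto (fun t : ℝ => g t / (κ * C * Real.log t))
      Filter.atTop (nhds 1) := by simp only [hgdef]; exact part1
  have hyp2' : Filter.Tendsto (fun t : ℝ => g t / (I1 / I2 * Real.log t))
      Filter.atTop (nhds 1) := by simp only [hgdef]; exact hyp2
  have hD : I1 / I2 ≠ 0 := by
    intro h0
    rw [h0] at hyp2
    simp only [zero_mul, div_zero] at hyp2
    exact absurd (tendsto_nhds_unique hyp2 tendsto_const_nhds) (by norm_num)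
  have hI2ne : I2 ≠ 0 := fun h => hD (by rw [h, div_zero])
  have hI1ne : I1 ≠ 0 := fun h => hD (by rw [h, zero_div])
  have hlog : ∀ᶠ t : ℝ in Filter.atTop, 0 < Real.log t := by
    filter_upwards [eventually_ge_atTop (Real.exp 1)] with t ht
    have ht0 : (0:ℝ) < t := lt_of_lt_of_le (Real.exp_pos 1) ht
    calc (0:ℝ) < 1 := one_pos
      _ ≤ Real.log t := (Real.le_log_iff_exp_le ht0).mpr ht
  have hgpos : ∀ᶠ t : ℝ in Filter.atTop, 0 < g t := by
    filter_upwards [part1'.eventually_const_lt (by norm_num : (1:ℝ)/2 < 1), hlog]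
      with t h1 h2
    by_contra hq
    push_neg at hq
    have hle : g t / (κ * C * Real.log t) ≤ 0 :=
      div_nonpos_iff.mpr (Or.inr ⟨hq, by positivity⟩)
    linarith
  have hratio : Filter.Tendsto
      (fun t : ℝ => (g t / (I1 / I2 * Real.log t)) / (g t / (κ * C * Real.log t)))
      Filter.atTop (nhds (1 / 1)) := hyp2'.div part1' one_ne_zero
  have hconst : ∀ᶠ t : ℝ in Filter.atTop,
      (g t / (I1 / I2 * Real.log t)) / (g t / (κ * C * Real.log t))
        = κ * C / (I1 / I2) := by
    filter_upwards [hlog, hgpos] with t h2 h1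
    rw [div_div_div_comm]
    rw [div_self h1.ne']
    field_simp
  have heq : κ * C / (I1 / I2) = 1 := by
    have hlim := Filter.Tendsto.congr' hconst hratio
    have := tendsto_nhds_unique hlim tendsto_const_nhds
    simpa using this.symm
  rw [div_eq_one_iff_eq hD] at heq
  have hfinal : I1 / (κ * I2) = C := by
    rw [mul_comm κ I2, ← div_div, ← heq, mul_comm κ C, mul_div_assoc,
      div_self hκ.ne', mul_one]
  exact hfinal.symm
end

section
/- Let (A,B) be a random vector with nonnegative coordinates satisfying P(A=1)<1, P(B=0)<1, E A^κ = 1 and E B^κ < ∞ for some κ>0. Then: (i) E A^p < 1 for every p ∈ (0,κ); (ii) E[A^κ ln A] ∈ (0, +∞] (i.e., the expectation, which is well defined since E[A^κ ln⁻ A] < ∞, is strictly positive, possibly infinite); and (iii) the unique-in-law solution U of U =_d A U + B (with U independent of (A,B)) satisfies E U^p < +∞ for every p ∈ (0,κ). -/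
open MeasureTheory ProbabilityTheory Filter Topology
open scoped ENNReal NNReal


lemma amgm_strict {t θ : ℝ} (ht : 0 ≤ t) (ht1 : t ≠ 1) (hθ0 : 0 < θ) (hθ1 : θ < 1) :
    t ^ θ < θ * t + (1 - θ) := by
  rcases eq_or_lt_of_le ht with rfl | ht
  · rw [Real.zero_rpow hθ0.ne']
    nlinarith
  · have hs : (-1:ℝ) ≤ t - 1 := by linarith
    have h := rpow_one_add_lt_one_add_mul_self hs (by intro h; apply ht1; linarith) hθ0 hθ1
    rw [show (1 : ℝ) + (t - 1) = t by ring] at h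
    linarith

lemma amgm_le {t θ : ℝ} (ht : 0 ≤ t) (hθ0 : 0 ≤ θ) (hθ1 : θ ≤ 1) :
    t ^ θ ≤ θ * t + (1 - θ) := by
  rcases eq_or_lt_of_le ht with rfl | ht
  · rcases eq_or_lt_of_le hθ0 with rfl | hθ0'
    · simp
    · rw [Real.zero_rpow hθ0'.ne']; nlinarith
  · have hs : (-1:ℝ) ≤ t - 1 := by linarith
    have h := rpow_one_add_le_one_add_mul_self hs hθ0 hθ1
    rw [show (1 : ℝ) + (t - 1) = t by ring] at h
    linarith

lemma rpow_eq_one_imp {x κ : ℝ} (hx : 0 ≤ x) (hκ : κ ≠ 0) (h : x ^ κ = 1) : x = 1 := by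
  have := congrArg (· ^ (1/κ)) h
  simpa [← Real.rpow_mul hx, mul_one_div, div_self hκ, mul_inv_cancel₀ hκ] using this

lemma partI {Ω : Type*} [MeasurableSpace Ω] (μ : Measure Ω) [IsProbabilityMeasure μ]
    (A : Ω → ℝ) (κ : ℝ) (hA : Measurable A) (hA0 : ∀ ω, 0 ≤ A ω) (hκ : 0 < κ)
    (hAne1 : μ {ω | A ω = 1} < 1)
    (hAκint : Integrable (fun ω => A ω ^ κ) μ) (hAκ : ∫ ω, A ω ^ κ ∂μ = 1)
    {p : ℝ} (hp : p ∈ Set.Ioo 0 κ) :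
    Integrable (fun ω => A ω ^ p) μ ∧ (∫ ω, A ω ^ p ∂μ) < 1 := by
  obtain ⟨hp0, hpκ⟩ := hp
  have hmeas : Measurable fun ω => A ω ^ p := hA.pow measurable_const
  have hint : Integrable (fun ω => A ω ^ p) μ := by
    refine Integrable.mono' (hAκint.add (integrable_const 1)) hmeas.aestronglyMeasurable ?_
    filter_upwards with ω
    simp only [Pi.add_apply]
    rw [Real.norm_of_nonneg (Real.rpow_nonneg (hA0 ω) p)]
    rcases le_or_gt (A ω) 1 with h | h
    · have h1 : A ω ^ p ≤ 1 := Real.rpow_le_one (hA0 ω) h hp0.le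
      have h2 : 0 ≤ A ω ^ κ := Real.rpow_nonneg (hA0 ω) κ
      linarith
    · have h1 : A ω ^ p ≤ A ω ^ κ := Real.rpow_le_rpow_of_exponent_le h.le hpκ.le
      linarith
  refine ⟨hint, ?_⟩
  set θ : ℝ := p / κ with hθdef
  have hθ0 : 0 < θ := div_pos hp0 hκ
  have hθ1 : θ < 1 := (div_lt_one hκ).2 hpκ
  have hxp : ∀ ω, A ω ^ p = (A ω ^ κ) ^ θ := by
    intro ω
    rw [← Real.rpow_mul (hA0 ω)]
    congr 1
    rw [hθdef]; field_simp
  set g : Ω → ℝ := fun ω => θ * A ω ^ κ + (1 - θ) - A ω ^ p with hgdef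
  have hg0 : ∀ ω, 0 ≤ g ω := by
    intro ω
    have := amgm_le (t := A ω ^ κ) (Real.rpow_nonneg (hA0 ω) κ) hθ0.le hθ1.le
    rw [← hxp ω] at this
    simp only [hgdef]
    linarith
  have hgint : Integrable g μ :=
    (((hAκint.const_mul θ).add (integrable_const (1 - θ))).sub hint)
  have hgpos : 0 < ∫ ω, g ω ∂μ := by
    rw [integral_pos_iff_support_of_nonneg hg0 hgint]
    have hsub : {ω | A ω ≠ 1} ⊆ Function.support g := by
      intro ω hω
      have hne : A ω ^ κ ≠ 1 := fun h => hω (rpow_eq_one_imp (hA0 ω) hκ.ne' h)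
      have := amgm_strict (t := A ω ^ κ) (Real.rpow_nonneg (hA0 ω) κ) hne hθ0 hθ1
      rw [← hxp ω] at this
      simp only [Function.mem_support, hgdef]
      intro h0
      rw [sub_eq_zero] at h0
      linarith
    have hc : μ {ω | A ω ≠ 1} = 1 - μ {ω | A ω = 1} := by
      have : {ω | A ω ≠ 1} = {ω | A ω = 1}ᶜ := rfl
      rw [this]
      exact prob_compl_eq_one_sub (hA (measurableSet_singleton 1))
    have hpos : 0 < μ {ω | A ω ≠ 1} := by
      rw [hc]
      exact tsub_pos_iff_lt.2 hAne1
    exact hpos.trans_le (measure_mono hsub)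
  have hgint₁ : Integrable (fun ω => θ * A ω ^ κ + (1 - θ)) μ :=
    (hAκint.const_mul θ).add (integrable_const (1 - θ))
  have hgint₂ : Integrable (fun ω => θ * A ω ^ κ) μ := hAκint.const_mul θ
  have hgi : ∫ ω, g ω ∂μ = 1 - ∫ ω, A ω ^ p ∂μ := by
    rw [hgdef]
    rw [integral_sub hgint₁ hint, integral_add hgint₂ (integrable_const (1 - θ)),
      integral_const_mul, hAκ, integral_const]
    simp
  rw [hgi] at hgpos
  linarith

lemma lnminus_bound {x κ : ℝ} (hx : 0 ≤ x) (hκ : 0 < κ) :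
    x ^ κ * max (-Real.log x) 0 ≤ 2 / κ := by
  rcases eq_or_lt_of_le hx with rfl | hx
  · rw [Real.zero_rpow hκ.ne', zero_mul]
    positivity
  rcases le_or_gt 1 x with h1 | h1
  · have : max (-Real.log x) 0 = 0 := max_eq_right (by simpa using Real.log_nonneg h1)
    rw [this, mul_zero]
    positivity
  · have hlog : Real.log x ≤ 0 := Real.log_nonpos hx.le (le_of_lt h1)
    have hmax : max (-Real.log x) 0 = -Real.log x := max_eq_left (by linarith)
    rw [hmax]
    have key : -Real.log x ≤ (2 / κ) * x ^ (-(κ / 2)) := by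
      have h2 := Real.log_le_sub_one_of_pos (Real.rpow_pos_of_pos hx (-(κ / 2)))
      rw [Real.log_rpow hx] at h2
      have hκ2 : 0 < κ / 2 := by linarith
      have h3 : 0 < x ^ (-(κ / 2)) := Real.rpow_pos_of_pos hx _
      calc -Real.log x = (2 / κ) * (-(κ / 2) * Real.log x) := by field_simp
        _ ≤ (2 / κ) * x ^ (-(κ / 2)) := by
            apply mul_le_mul_of_nonneg_left _ (by positivity)
            linarith
    have hxκ : 0 < x ^ κ := Real.rpow_pos_of_pos hx κ
    calc x ^ κ * -Real.log x ≤ x ^ κ * ((2 / κ) * x ^ (-(κ / 2))) := by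
          apply mul_le_mul_of_nonneg_left key hxκ.le
      _ = (2 / κ) * x ^ (κ / 2) := by
          rw [← mul_assoc, mul_comm (x ^ κ), mul_assoc, ← Real.rpow_add hx]
          ring_nf
      _ ≤ (2 / κ) * 1 := by
          apply mul_le_mul_of_nonneg_left _ (by positivity)
          exact Real.rpow_le_one hx.le h1.le (by positivity)
      _ = 2 / κ := mul_one _

lemma partIIa {Ω : Type*} [MeasurableSpace Ω] (μ : Measure Ω) [IsProbabilityMeasure μ]
    (A : Ω → ℝ) (κ : ℝ) (hA : Measurable A) (hA0 : ∀ ω, 0 ≤ A ω) (hκ : 0 < κ) :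
    Integrable (fun ω => A ω ^ κ * max (-Real.log (A ω)) 0) μ := by
  have hmeas : Measurable fun ω => A ω ^ κ * max (-Real.log (A ω)) 0 :=
    (hA.pow measurable_const).mul (hA.log.neg.max measurable_const)
  refine Integrable.mono' (integrable_const (2 / κ)) hmeas.aestronglyMeasurable ?_
  filter_upwards with ω
  rw [Real.norm_of_nonneg (mul_nonneg (Real.rpow_nonneg (hA0 ω) κ) (le_max_right _ _))]
  exact lnminus_bound (hA0 ω) hκ

lemma pointwise_log_bound {x κ : ℝ} (hx : 0 ≤ x) (hκ : 0 < κ) :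
    x ^ κ + (κ / 2 - κ) * (x ^ κ * Real.log x) ≤ x ^ (κ / 2) := by
  rcases eq_or_lt_of_le hx with rfl | hx
  · simp [Real.zero_rpow hκ.ne', Real.zero_rpow (by positivity : (κ/2 : ℝ) ≠ 0)]
  · set c : ℝ := κ / 2 - κ with hc
    have h1 : 1 + c * Real.log x ≤ x ^ c := by
      have := Real.add_one_le_exp (c * Real.log x)
      rw [Real.rpow_def_of_pos hx]
      rw [mul_comm c (Real.log x)] at this ⊢
      linarith
    have hxκ : 0 < x ^ κ := Real.rpow_pos_of_pos hx κ
    have h2 : x ^ κ * (1 + c * Real.log x) ≤ x ^ κ * x ^ c :=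
      mul_le_mul_of_nonneg_left h1 hxκ.le
    rw [← Real.rpow_add hx] at h2
    have : κ + c = κ / 2 := by rw [hc]; ring
    rw [this] at h2
    nlinarith

lemma integrable_rpow_aux {Ω : Type*} [MeasurableSpace Ω] {μ : Measure Ω} [IsFiniteMeasure μ]
    {f : Ω → ℝ} (hf : Measurable f) (h0 : ∀ ω, 0 ≤ f ω) {p κ : ℝ} (hp : 0 ≤ p) (hpκ : p ≤ κ)
    (hint : Integrable (fun ω => f ω ^ κ) μ) : Integrable (fun ω => f ω ^ p) μ := by
  refine Integrable.mono' (hint.add (integrable_const 1))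
    ((hf.pow measurable_const).aestronglyMeasurable) ?_
  filter_upwards with ω
  simp only [Pi.add_apply]
  rw [Real.norm_of_nonneg (Real.rpow_nonneg (h0 ω) p)]
  rcases le_or_gt (f ω) 1 with h | h
  · have h1 : f ω ^ p ≤ 1 := Real.rpow_le_one (h0 ω) h hp
    have h2 : 0 ≤ f ω ^ κ := Real.rpow_nonneg (h0 ω) κ
    linarith
  · have h1 : f ω ^ p ≤ f ω ^ κ := Real.rpow_le_rpow_of_exponent_le h.le hpκ
    linarith

noncomputable section

namespace PerpetuityAux

abbrev E3 := ℝ≥0∞ × ℝ≥0∞ × ℝ≥0∞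

def stepFun : E3 × (ℝ≥0∞ × ℝ≥0∞) → E3 :=
  fun z => (z.2.1 * z.1.1, z.2.1 * z.1.2.1 + z.2.2, z.1.2.2)

lemma measurable_stepFun : Measurable stepFun := by
  unfold stepFun
  fun_prop

def fmain : E3 → ℝ≥0∞ := fun q => q.1 * q.2.2 + q.2.1

lemma measurable_fmain : Measurable fmain := by
  unfold fmain
  fun_prop

def tauSeq (ν : Measure ℝ≥0∞) (lam : Measure (ℝ≥0∞ × ℝ≥0∞)) : ℕ → Measure E3
  | 0 => ν.map (fun u => (1, 0, u))
  | k + 1 => ((tauSeq ν lam k).prod lam).map stepFun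

variable {ν : Measure ℝ≥0∞} {lam : Measure (ℝ≥0∞ × ℝ≥0∞)}
variable [IsProbabilityMeasure ν] [IsProbabilityMeasure lam]

instance tauSeq_prob (k : ℕ) : IsProbabilityMeasure (tauSeq ν lam k) := by
  induction k with
  | zero => exact Measure.isProbabilityMeasure_map (by fun_prop)
  | succ k ih =>
    haveI := ih
    exact Measure.isProbabilityMeasure_map measurable_stepFun.aemeasurable

lemma tauSeq_fmain
    (hfix : (ν.prod lam).map (fun q : ℝ≥0∞ × (ℝ≥0∞ × ℝ≥0∞) => q.2.1 * q.1 + q.2.2) = ν) :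
    ∀ k, (tauSeq ν lam k).map fmain = ν := by
  intro k
  induction k with
  | zero =>
    rw [tauSeq, Measure.map_map measurable_fmain (by fun_prop)]
    have : (fmain ∘ fun u : ℝ≥0∞ => ((1 : ℝ≥0∞), (0 : ℝ≥0∞), u)) = id := by
      funext u; simp [fmain]
    rw [this, Measure.map_id]
  | succ k ih =>
    have h1 : (tauSeq ν lam (k+1)).map fmain
        = ((tauSeq ν lam k).prod lam).map (fmain ∘ stepFun) := by
      rw [tauSeq, Measure.map_map measurable_fmain measurable_stepFun]
    have h2 : (fmain ∘ stepFun)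
        = (fun q : ℝ≥0∞ × (ℝ≥0∞ × ℝ≥0∞) => q.2.1 * q.1 + q.2.2) ∘ (Prod.map fmain id) := by
      funext z
      simp only [Function.comp_apply, fmain, stepFun, Prod.map, id_eq]
      ring
    rw [h1, h2, ← Measure.map_map (by fun_prop) (measurable_fmain.prodMap measurable_id),
      ← Measure.map_prod_map _ _ measurable_fmain measurable_id, Measure.map_id, ih, hfix]

lemma tauSeq_third : ∀ k, (tauSeq ν lam k).map (fun q : E3 => q.2.2) = ν := by
  intro k
  induction k with
  | zero =>
    rw [tauSeq, Measure.map_map (by fun_prop) (by fun_prop)]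
    have : ((fun q : E3 => q.2.2) ∘ fun u : ℝ≥0∞ => ((1 : ℝ≥0∞), (0 : ℝ≥0∞), u)) = id := rfl
    rw [this, Measure.map_id]
  | succ k ih =>
    rw [tauSeq, Measure.map_map (by fun_prop) measurable_stepFun]
    have h2 : ((fun q : E3 => q.2.2) ∘ stepFun)
        = (fun q : E3 => q.2.2) ∘ (Prod.fst : E3 × (ℝ≥0∞ × ℝ≥0∞) → E3) := rfl
    rw [h2, ← Measure.map_map (by fun_prop) measurable_fst]
    rw [Measure.map_fst_prod]
    simp [ih]

variable {p : ℝ}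

lemma tauSeq_pi (hp : 0 < p) :
    ∀ k, ∫⁻ q, q.1 ^ p ∂(tauSeq ν lam k) = (∫⁻ y, y.1 ^ p ∂lam) ^ k := by
  intro k
  induction k with
  | zero =>
    rw [tauSeq, lintegral_map (by fun_prop) (by fun_prop)]
    simp [ENNReal.one_rpow]
  | succ k ih =>
    rw [tauSeq, lintegral_map (by fun_prop) measurable_stepFun]
    have : ∀ z : E3 × (ℝ≥0∞ × ℝ≥0∞), (stepFun z).1 ^ p = z.2.1 ^ p * z.1.1 ^ p := by
      intro z
      simp only [stepFun]
      rw [ENNReal.mul_rpow_of_nonneg _ _ hp.le]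
    simp_rw [this]
    rw [lintegral_prod _ (by fun_prop)]
    have inner : ∀ q : E3, ∫⁻ y, y.1 ^ p * q.1 ^ p ∂lam = (∫⁻ y, y.1 ^ p ∂lam) * q.1 ^ p := by
      intro q
      rw [lintegral_mul_const _ (by fun_prop)]
    simp_rw [inner]
    rw [lintegral_const_mul _ (by fun_prop), ih]
    ring

lemma tauSeq_s_rec (hp : 0 < p) (k : ℕ) :
    ∫⁻ q, q.2.1 ^ p ∂(tauSeq ν lam (k+1))
      = ∫⁻ z, (z.2.1 * z.1.2.1 + z.2.2) ^ p ∂((tauSeq ν lam k).prod lam) := by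
  rw [tauSeq, lintegral_map (by fun_prop) measurable_stepFun]
  rfl

lemma lintegral_prod_as (hp : 0 < p) (k : ℕ) :
    ∫⁻ z : E3 × (ℝ≥0∞ × ℝ≥0∞), (z.2.1 * z.1.2.1) ^ p ∂((tauSeq ν lam k).prod lam)
      = (∫⁻ y, y.1 ^ p ∂lam) * ∫⁻ q, q.2.1 ^ p ∂(tauSeq ν lam k) := by
  have : ∀ z : E3 × (ℝ≥0∞ × ℝ≥0∞), (z.2.1 * z.1.2.1) ^ p = z.2.1 ^ p * z.1.2.1 ^ p := by
    intro z; rw [ENNReal.mul_rpow_of_nonneg _ _ hp.le]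
  simp_rw [this]
  rw [lintegral_prod _ (by fun_prop)]
  have inner : ∀ q : E3, ∫⁻ y, y.1 ^ p * q.2.1 ^ p ∂lam
      = (∫⁻ y, y.1 ^ p ∂lam) * q.2.1 ^ p := by
    intro q; rw [lintegral_mul_const _ (by fun_prop)]
  simp_rw [inner]
  rw [lintegral_const_mul _ (by fun_prop)]

lemma lintegral_prod_b (hp : 0 < p) (k : ℕ) :
    ∫⁻ z : E3 × (ℝ≥0∞ × ℝ≥0∞), z.2.2 ^ p ∂((tauSeq ν lam k).prod lam)
      = ∫⁻ y, y.2 ^ p ∂lam := by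
  rw [lintegral_prod _ (by fun_prop)]
  simp [lintegral_lintegral_swap]


lemma ennreal_exists_pow_le {r ε : ℝ≥0∞} (hr : r < 1) (hε : ε ≠ 0) : ∃ k : ℕ, r ^ k ≤ ε := by
  rcases eq_or_ne ε ⊤ with rfl | hεT
  · exact ⟨0, le_top⟩
  · have hrT : r ≠ ⊤ := hr.trans_le le_top |>.ne
    lift r to ℝ≥0 using hrT
    have hr1 : r < 1 := by exact_mod_cast hr
    have hε0 : 0 < ε.toNNReal := by
      simp [ENNReal.toNNReal_pos hε hεT]
    obtain ⟨k, hk⟩ := exists_pow_lt_of_lt_one hε0 hr1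
    refine ⟨k, ?_⟩
    calc (r : ℝ≥0∞) ^ k = ((r ^ k : ℝ≥0) : ℝ≥0∞) := by rw [ENNReal.coe_pow]
      _ ≤ (ε.toNNReal : ℝ≥0∞) := by exact_mod_cast hk.le
      _ = ε := ENNReal.coe_toNNReal hεT

lemma exists_tail_small (ν : Measure ℝ≥0∞) [IsProbabilityMeasure ν] (hν : ν {⊤} = 0)
    {ε : ℝ≥0∞} (hε : ε ≠ 0) : ∃ M : ℝ≥0∞, M ≠ 0 ∧ M ≠ ⊤ ∧ ν {x | M < x} ≤ ε := by
  have h1 : Tendsto (fun j : ℕ => ν {x | (j : ℝ≥0∞) < x}) atTop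
      (𝓝 (ν (⋂ j : ℕ, {x | (j : ℝ≥0∞) < x}))) := by
    apply tendsto_measure_iInter_atTop
    · intro j
      exact (measurableSet_Ioi : MeasurableSet (Set.Ioi (j : ℝ≥0∞))).nullMeasurableSet
    · intro i j hij x hx
      exact lt_of_le_of_lt (by exact_mod_cast hij : (i : ℝ≥0∞) ≤ j) hx
    · exact ⟨0, measure_ne_top ν _⟩
  have h2 : (⋂ j : ℕ, {x : ℝ≥0∞ | (j : ℝ≥0∞) < x}) = {⊤} := by
    ext x
    simp only [Set.mem_iInter, Set.mem_setOf_eq, Set.mem_singleton_iff]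
    constructor
    · intro h
      by_contra hx
      obtain ⟨n, hn⟩ := ENNReal.exists_nat_gt hx
      exact absurd (h n) (not_lt.2 hn.le)
    · rintro rfl j
      exact lt_top_iff_ne_top.2 (ENNReal.natCast_ne_top j)
  rw [h2, hν] at h1
  have hev : ∀ᶠ j : ℕ in atTop, ν {x | (j : ℝ≥0∞) < x} < ε :=
    h1.eventually_lt_const (pos_iff_ne_zero.2 hε)
  obtain ⟨j, hj⟩ := hev.exists
  refine ⟨(j : ℝ≥0∞) + 1, by simp, by simp, ?_⟩
  refine le_trans (measure_mono ?_) hj.le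
  intro x hx
  exact lt_of_le_of_lt (le_self_add) (show (j : ℝ≥0∞) + 1 < x from hx)

lemma iSup_min_rpow {p : ℝ} (hp : 0 < p) (x : ℝ≥0∞) :
    (⨆ n : ℕ, min x ((n : ℝ≥0∞) + 1) ^ p) = x ^ p := by
  apply le_antisymm
  · exact iSup_le fun n => ENNReal.rpow_le_rpow (min_le_left _ _) hp.le
  rcases eq_or_ne x ⊤ with rfl | hx
  · rw [ENNReal.top_rpow_of_pos hp, top_le_iff, iSup_eq_top]
    intro b hb
    have hbT : b ^ (1 / p) ≠ ⊤ := ENNReal.rpow_ne_top_of_nonneg (by positivity) hb.ne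
    obtain ⟨n, hn⟩ := ENNReal.exists_nat_gt hbT
    refine ⟨n, ?_⟩
    have h1 : min (⊤ : ℝ≥0∞) ((n : ℝ≥0∞) + 1) = (n : ℝ≥0∞) + 1 := min_eq_right le_top
    rw [h1]
    calc b = (b ^ (1 / p)) ^ p := by
          rw [← ENNReal.rpow_mul, one_div, inv_mul_cancel₀ hp.ne', ENNReal.rpow_one]
      _ < ((n : ℝ≥0∞) + 1) ^ p :=
          ENNReal.rpow_lt_rpow (hn.trans_le le_self_add) hp
  · obtain ⟨n, hn⟩ := ENNReal.exists_nat_gt hx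
    have h1 : min x ((n : ℝ≥0∞) + 1) = x := min_eq_left (hn.le.trans le_self_add)
    calc x ^ p = min x ((n : ℝ≥0∞) + 1) ^ p := by rw [h1]
      _ ≤ _ := le_iSup (fun n : ℕ => min x ((n : ℝ≥0∞) + 1) ^ p) n

lemma geom_step {r β : ℝ≥0∞} (hr : r < 1) (hβ : β ≠ ⊤) :
    r * (β * (1 - r)⁻¹) + β = β * (1 - r)⁻¹ := by
  have h0 : (1 : ℝ≥0∞) - r ≠ 0 := (tsub_pos_iff_lt.2 hr).ne'
  have hT : (1 : ℝ≥0∞) - r ≠ ⊤ := (lt_of_le_of_lt tsub_le_self ENNReal.one_lt_top).ne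
  have hcan : (1 - r) * (1 - r)⁻¹ = 1 := ENNReal.mul_inv_cancel h0 hT
  have hsum : r + (1 - r) = 1 := add_tsub_cancel_of_le hr.le
  calc r * (β * (1 - r)⁻¹) + β = β * (r * (1 - r)⁻¹ + 1) := by ring
    _ = β * (r * (1 - r)⁻¹ + (1 - r) * (1 - r)⁻¹) := by rw [hcan]
    _ = β * ((r + (1 - r)) * (1 - r)⁻¹) := by ring
    _ = β * (1 - r)⁻¹ := by rw [hsum, one_mul]

lemma sigma_bound {p : ℝ} (hp : 0 < p)
    (hr : ∫⁻ y, y.1 ^ p ∂lam < 1) (hβ : ∫⁻ y, y.2 ^ p ∂lam ≠ ⊤) :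
    ∃ C : ℝ≥0∞, C ≠ ⊤ ∧ ∀ k, ∫⁻ q, q.2.1 ^ p ∂(tauSeq ν lam k) ≤ C := by
  set r := ∫⁻ y, y.1 ^ p ∂lam with hrdef
  set β := ∫⁻ y, y.2 ^ p ∂lam with hβdef
  have hσ0 : ∫⁻ q, q.2.1 ^ p ∂(tauSeq ν lam 0) = 0 := by
    rw [tauSeq, lintegral_map (by fun_prop) (by fun_prop)]
    simp [ENNReal.zero_rpow_of_pos hp]
  have hrec : ∀ k, ∫⁻ q, q.2.1 ^ p ∂(tauSeq ν lam (k + 1))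
      = ∫⁻ z, (z.2.1 * z.1.2.1 + z.2.2) ^ p ∂((tauSeq ν lam k).prod lam) :=
    fun k => tauSeq_s_rec hp k
  rcases le_or_gt p 1 with hp1 | hp1
  · refine ⟨β * (1 - r)⁻¹, ?_, ?_⟩
    · exact ENNReal.mul_ne_top hβ (ENNReal.inv_ne_top.2 (tsub_pos_iff_lt.2 hr).ne')
    · intro k
      induction k with
      | zero => rw [hσ0]; exact zero_le
      | succ k ih =>
        rw [hrec k]
        calc ∫⁻ z, (z.2.1 * z.1.2.1 + z.2.2) ^ p ∂((tauSeq ν lam k).prod lam)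
            ≤ ∫⁻ z, ((z.2.1 * z.1.2.1) ^ p + z.2.2 ^ p) ∂((tauSeq ν lam k).prod lam) := by
              apply lintegral_mono
              intro z
              exact ENNReal.rpow_add_le_add_rpow _ _ hp.le hp1
          _ = r * (∫⁻ q, q.2.1 ^ p ∂(tauSeq ν lam k)) + β := by
              rw [lintegral_add_left (by fun_prop), lintegral_prod_as hp k,
                lintegral_prod_b hp k]
          _ ≤ r * (β * (1 - r)⁻¹) + β := by
              gcongr
          _ = β * (1 - r)⁻¹ := geom_step hr hβ
  · set st := r ^ (1 / p) with hstdef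
    have hst1 : st < 1 := ENNReal.rpow_lt_one hr (by positivity)
    have hβp : β ^ (1 / p) ≠ ⊤ := ENNReal.rpow_ne_top_of_nonneg (by positivity) hβ
    set C' := β ^ (1 / p) * (1 - st)⁻¹ with hC'def
    have hC'T : C' ≠ ⊤ :=
      ENNReal.mul_ne_top hβp (ENNReal.inv_ne_top.2 (tsub_pos_iff_lt.2 hst1).ne')
    have key : ∀ k, (∫⁻ q, q.2.1 ^ p ∂(tauSeq ν lam k)) ^ (1 / p) ≤ C' := by
      intro k
      induction k with
      | zero =>
        rw [hσ0, ENNReal.zero_rpow_of_pos (by positivity)]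
        exact zero_le
      | succ k ih =>
        rw [hrec k]
        calc (∫⁻ z, (z.2.1 * z.1.2.1 + z.2.2) ^ p ∂((tauSeq ν lam k).prod lam)) ^ (1 / p)
            ≤ (∫⁻ z, (z.2.1 * z.1.2.1) ^ p ∂((tauSeq ν lam k).prod lam)) ^ (1 / p)
              + (∫⁻ z : E3 × (ℝ≥0∞ × ℝ≥0∞), z.2.2 ^ p ∂((tauSeq ν lam k).prod lam)) ^ (1 / p) :=
              ENNReal.lintegral_Lp_add_le (by fun_prop) (by fun_prop) hp1.le
          _ = (r * ∫⁻ q, q.2.1 ^ p ∂(tauSeq ν lam k)) ^ (1 / p) + β ^ (1 / p) := by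
              rw [lintegral_prod_as hp k, lintegral_prod_b hp k]
          _ = st * (∫⁻ q, q.2.1 ^ p ∂(tauSeq ν lam k)) ^ (1 / p) + β ^ (1 / p) := by
              rw [ENNReal.mul_rpow_of_nonneg _ _ (by positivity)]
          _ ≤ st * C' + β ^ (1 / p) := by gcongr
          _ = C' := geom_step hst1 hβp
    refine ⟨C' ^ p, ENNReal.rpow_ne_top_of_nonneg hp.le hC'T, fun k => ?_⟩
    calc ∫⁻ q, q.2.1 ^ p ∂(tauSeq ν lam k)
        = ((∫⁻ q, q.2.1 ^ p ∂(tauSeq ν lam k)) ^ (1 / p)) ^ p := by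
          rw [← ENNReal.rpow_mul, one_div, inv_mul_cancel₀ hp.ne', ENNReal.rpow_one]
      _ ≤ C' ^ p := ENNReal.rpow_le_rpow (key k) hp.le

lemma moment_lt_top {p : ℝ} (hp : 0 < p)
    (hfix : (ν.prod lam).map (fun q : ℝ≥0∞ × (ℝ≥0∞ × ℝ≥0∞) => q.2.1 * q.1 + q.2.2) = ν)
    (hν : ν {⊤} = 0)
    (hr : ∫⁻ y, y.1 ^ p ∂lam < 1) (hβ : ∫⁻ y, y.2 ^ p ∂lam ≠ ⊤) :
    ∫⁻ x, x ^ p ∂ν ≠ ⊤ := by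
  set r := ∫⁻ y, y.1 ^ p ∂lam with hrdef
  obtain ⟨C, hCT, hCσ⟩ := sigma_bound (ν := ν) hp hr hβ
  set m : ℕ → ℝ≥0∞ := fun n => ∫⁻ x, min x ((n : ℝ≥0∞) + 1) ^ p ∂ν with hmdef
  -- the per-n decomposition
  have main : ∀ n : ℕ, ∃ k : ℕ,
      (m n ≤ ∫⁻ q, (min (q.1 * q.2.2) ((n : ℝ≥0∞) + 1) + q.2.1) ^ p ∂(tauSeq ν lam k)) ∧
      (∫⁻ q, min (q.1 * q.2.2) ((n : ℝ≥0∞) + 1) ^ p ∂(tauSeq ν lam k) ≤ 3) := by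
    intro n
    set nn : ℝ≥0∞ := (n : ℝ≥0∞) + 1 with hnndef
    have hnn0 : nn ≠ 0 := by simp [hnndef]
    have hnnT : nn ≠ ⊤ := by simp [hnndef]
    have hnnp0 : nn ^ p ≠ 0 :=
      (ENNReal.rpow_pos (pos_iff_ne_zero.2 hnn0) hnnT).ne'
    have hnnpT : nn ^ p ≠ ⊤ := ENNReal.rpow_ne_top_of_nonneg hp.le hnnT
    obtain ⟨M, hM0, hMT, hMtail⟩ :=
      exists_tail_small ν hν (ENNReal.inv_ne_zero.2 hnnpT)
    have hMp0 : M ^ p ≠ 0 :=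
      (ENNReal.rpow_pos (pos_iff_ne_zero.2 hM0) hMT).ne'
    have hMpT : M ^ p ≠ ⊤ := ENNReal.rpow_ne_top_of_nonneg hp.le hMT
    have hprodne : nn ^ p * M ^ p ≠ ⊤ := ENNReal.mul_ne_top hnnpT hMpT
    obtain ⟨k, hk⟩ := ennreal_exists_pow_le hr (ENNReal.inv_ne_zero.2 hprodne)
    refine ⟨k, ?_, ?_⟩
    · -- m n expressed over tauSeq k and bounded
      have hmap := tauSeq_fmain hfix k
      have hmeas : Measurable fun x : ℝ≥0∞ => min x nn ^ p := by fun_prop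
      have hmn : m n = ∫⁻ q, min (fmain q) nn ^ p ∂(tauSeq ν lam k) := by
        simp only [hmdef]
        conv_lhs => rw [← hmap]
        rw [lintegral_map hmeas measurable_fmain]
      rw [hmn]
      apply lintegral_mono
      intro q
      apply ENNReal.rpow_le_rpow _ hp.le
      calc min (fmain q) nn ≤ min (q.1 * q.2.2 + q.2.1) (nn + q.2.1) := by
            apply min_le_min _ le_self_add
            exact le_of_eq rfl
        _ = min (q.1 * q.2.2) nn + q.2.1 := min_add_add_right _ _ _
    · -- the key tail estimate
      have hS : MeasurableSet {q : E3 | 1 < q.1 * q.2.2} := by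
        have : Measurable fun q : E3 => q.1 * q.2.2 := by fun_prop
        exact this measurableSet_Ioi
      have htail : (tauSeq ν lam k) {q : E3 | 1 < q.1 * q.2.2}
          ≤ r ^ k * M ^ p + (nn ^ p)⁻¹ := by
        have hsub : {q : E3 | 1 < q.1 * q.2.2}
            ⊆ {q : E3 | M⁻¹ ≤ q.1} ∪ {q : E3 | M < q.2.2} := by
          intro q hq
          by_contra hcon
          simp only [Set.mem_union, Set.mem_setOf_eq, not_or, not_le, not_lt] at hcon
          obtain ⟨h1, h2⟩ := hcon
          have hle : q.1 * q.2.2 ≤ M⁻¹ * M := mul_le_mul' h1.le h2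
          rw [ENNReal.inv_mul_cancel hM0 hMT] at hle
          exact hle.not_gt hq
        have hb1 : (tauSeq ν lam k) {q : E3 | M⁻¹ ≤ q.1} ≤ r ^ k * M ^ p := by
          have hsub2 : {q : E3 | M⁻¹ ≤ q.1} ⊆ {q : E3 | (M⁻¹) ^ p ≤ q.1 ^ p} :=
            fun q hq => ENNReal.rpow_le_rpow hq hp.le
          have hε0 : (M⁻¹) ^ p ≠ 0 :=
            (ENNReal.rpow_pos (pos_iff_ne_zero.2 (ENNReal.inv_ne_zero.2 hMT))
              (ENNReal.inv_ne_top.2 hM0)).ne'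
          have hεT : (M⁻¹) ^ p ≠ ⊤ :=
            ENNReal.rpow_ne_top_of_nonneg hp.le (ENNReal.inv_ne_top.2 hM0)
          calc (tauSeq ν lam k) {q : E3 | M⁻¹ ≤ q.1}
              ≤ (tauSeq ν lam k) {q : E3 | (M⁻¹) ^ p ≤ q.1 ^ p} := measure_mono hsub2
            _ ≤ (∫⁻ q, q.1 ^ p ∂(tauSeq ν lam k)) / (M⁻¹) ^ p :=
                meas_ge_le_lintegral_div (by fun_prop) hε0 hεT
            _ = r ^ k * M ^ p := by
                rw [tauSeq_pi hp k, ENNReal.inv_rpow, div_eq_mul_inv, inv_inv]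
        have hb2 : (tauSeq ν lam k) {q : E3 | M < q.2.2} ≤ (nn ^ p)⁻¹ := by
          have := tauSeq_third (ν := ν) (lam := lam) k
          have hmapeq : (tauSeq ν lam k) {q : E3 | M < q.2.2} = ν {x | M < x} := by
            have h' := Measure.map_apply (f := fun q : E3 => q.2.2) (μ := tauSeq ν lam k)
              (by fun_prop) (measurableSet_Ioi (a := M))
            rw [this] at h'
            exact h'.symm
          rw [hmapeq]
          exact hMtail
        calc (tauSeq ν lam k) {q : E3 | 1 < q.1 * q.2.2}
            ≤ (tauSeq ν lam k) ({q : E3 | M⁻¹ ≤ q.1} ∪ {q : E3 | M < q.2.2}) :=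
              measure_mono hsub
          _ ≤ (tauSeq ν lam k) {q : E3 | M⁻¹ ≤ q.1} + (tauSeq ν lam k) {q : E3 | M < q.2.2} :=
              measure_union_le _ _
          _ ≤ r ^ k * M ^ p + (nn ^ p)⁻¹ := add_le_add hb1 hb2
      have hpoint : ∀ q : E3, min (q.1 * q.2.2) nn ^ p
          ≤ 1 + Set.indicator {q : E3 | 1 < q.1 * q.2.2} (fun _ => nn ^ p) q := by
        intro q
        rcases le_or_gt (q.1 * q.2.2) 1 with h | h
        · have : min (q.1 * q.2.2) nn ^ p ≤ 1 :=
            ENNReal.rpow_le_one (le_trans (min_le_left _ _) h) hp.le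
          exact le_trans this le_self_add
        · have hmem : q ∈ {q : E3 | 1 < q.1 * q.2.2} := h
          have hind : Set.indicator {q : E3 | 1 < q.1 * q.2.2} (fun _ => nn ^ p) q = nn ^ p :=
            Set.indicator_of_mem hmem _
          rw [hind]
          have : min (q.1 * q.2.2) nn ^ p ≤ nn ^ p :=
            ENNReal.rpow_le_rpow (min_le_right _ _) hp.le
          exact le_trans this le_add_self
      calc ∫⁻ q, min (q.1 * q.2.2) nn ^ p ∂(tauSeq ν lam k)
          ≤ ∫⁻ q, (1 + Set.indicator {q : E3 | 1 < q.1 * q.2.2} (fun _ => nn ^ p) q)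
              ∂(tauSeq ν lam k) := lintegral_mono hpoint
        _ = 1 + nn ^ p * (tauSeq ν lam k) {q : E3 | 1 < q.1 * q.2.2} := by
            rw [lintegral_add_left measurable_const, lintegral_const,
              lintegral_indicator_const hS]
            simp
        _ ≤ 1 + nn ^ p * (r ^ k * M ^ p + (nn ^ p)⁻¹) := by gcongr
        _ = 1 + (nn ^ p * M ^ p) * r ^ k + nn ^ p * (nn ^ p)⁻¹ := by ring
        _ ≤ 1 + (nn ^ p * M ^ p) * (nn ^ p * M ^ p)⁻¹ + 1 :=
            add_le_add (add_le_add le_rfl (mul_le_mul_right hk _))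
              (le_of_eq (ENNReal.mul_inv_cancel hnnp0 hnnpT))
        _ ≤ 1 + 1 + 1 :=
            add_le_add (add_le_add le_rfl
              (le_of_eq (ENNReal.mul_inv_cancel (mul_ne_zero hnnp0 hMp0) hprodne))) le_rfl
        _ = 3 := by norm_num
  -- combine into a uniform bound D on m n
  have hbdd : ∃ D : ℝ≥0∞, D ≠ ⊤ ∧ ∀ n, m n ≤ D := by
    rcases le_or_gt p 1 with hp1 | hp1
    · refine ⟨3 + C, by simp [ENNReal.add_ne_top, hCT], fun n => ?_⟩
      obtain ⟨k, h1, h2⟩ := main n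
      calc m n ≤ ∫⁻ q, (min (q.1 * q.2.2) ((n : ℝ≥0∞) + 1) + q.2.1) ^ p ∂(tauSeq ν lam k) := h1
        _ ≤ ∫⁻ q, (min (q.1 * q.2.2) ((n : ℝ≥0∞) + 1) ^ p + q.2.1 ^ p) ∂(tauSeq ν lam k) :=
            lintegral_mono fun q => ENNReal.rpow_add_le_add_rpow _ _ hp.le hp1
        _ = (∫⁻ q, min (q.1 * q.2.2) ((n : ℝ≥0∞) + 1) ^ p ∂(tauSeq ν lam k))
            + ∫⁻ q, q.2.1 ^ p ∂(tauSeq ν lam k) := lintegral_add_left (by fun_prop) _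
        _ ≤ 3 + C := add_le_add h2 (hCσ k)
    · refine ⟨((3 : ℝ≥0∞) ^ (1 / p) + C ^ (1 / p)) ^ p, ?_, fun n => ?_⟩
      · apply ENNReal.rpow_ne_top_of_nonneg hp.le
        exact ENNReal.add_ne_top.2 ⟨ENNReal.rpow_ne_top_of_nonneg (by positivity) (by simp),
          ENNReal.rpow_ne_top_of_nonneg (by positivity) hCT⟩
      · obtain ⟨k, h1, h2⟩ := main n
        have step : (m n) ^ (1 / p) ≤ (3 : ℝ≥0∞) ^ (1 / p) + C ^ (1 / p) := by
          calc (m n) ^ (1 / p)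
              ≤ (∫⁻ q, (min (q.1 * q.2.2) ((n : ℝ≥0∞) + 1) + q.2.1) ^ p
                  ∂(tauSeq ν lam k)) ^ (1 / p) := ENNReal.rpow_le_rpow h1 (by positivity)
            _ ≤ (∫⁻ q, min (q.1 * q.2.2) ((n : ℝ≥0∞) + 1) ^ p ∂(tauSeq ν lam k)) ^ (1 / p)
                + (∫⁻ q : E3, q.2.1 ^ p ∂(tauSeq ν lam k)) ^ (1 / p) :=
                ENNReal.lintegral_Lp_add_le (by fun_prop) (by fun_prop) hp1.le
            _ ≤ (3 : ℝ≥0∞) ^ (1 / p) + C ^ (1 / p) :=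
                add_le_add (ENNReal.rpow_le_rpow h2 (by positivity))
                  (ENNReal.rpow_le_rpow (hCσ k) (by positivity))
        calc m n = ((m n) ^ (1 / p)) ^ p := by
              rw [← ENNReal.rpow_mul, one_div, inv_mul_cancel₀ hp.ne', ENNReal.rpow_one]
          _ ≤ ((3 : ℝ≥0∞) ^ (1 / p) + C ^ (1 / p)) ^ p := ENNReal.rpow_le_rpow step hp.le
  obtain ⟨D, hDT, hD⟩ := hbdd
  have hmono : Monotone fun n : ℕ => fun x : ℝ≥0∞ => min x ((n : ℝ≥0∞) + 1) ^ p := by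
    intro i j hij x
    apply ENNReal.rpow_le_rpow _ hp.le
    exact min_le_min le_rfl (by exact_mod_cast add_le_add_left (Nat.cast_le.2 hij) 1)
  have hsup : ∫⁻ x, x ^ p ∂ν = ⨆ n : ℕ, m n := by
    simp only [hmdef]
    rw [← lintegral_iSup (fun n => by fun_prop) hmono]
    congr 1
    funext x
    exact (iSup_min_rpow hp x).symm
  rw [hsup]
  exact (lt_of_le_of_lt (iSup_le hD) hDT.lt_top).ne


end PerpetuityAux

end




section Glue

open PerpetuityAux in
lemma partIII {Ω : Type*} [MeasurableSpace Ω] (μ : Measure Ω) [IsProbabilityMeasure μ]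
    (A B U : Ω → ℝ) (hA : Measurable A) (hB : Measurable B) (hU : Measurable U)
    (hA0 : ∀ ω, 0 ≤ A ω) (hB0 : ∀ ω, 0 ≤ B ω) (hU0 : ∀ᵐ ω ∂μ, 0 ≤ U ω)
    (hindep : IndepFun U (fun ω => (A ω, B ω)) μ)
    (hfix : Measure.map U μ = Measure.map (fun ω => A ω * U ω + B ω) μ)
    {p : ℝ} (hp : 0 < p)
    (hrA : Integrable (fun ω => A ω ^ p) μ) (hrA1 : ∫ ω, A ω ^ p ∂μ < 1)
    (hrB : Integrable (fun ω => B ω ^ p) μ) :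
    Integrable (fun ω => U ω ^ p) μ := by
  classical
  set oU : Ω → ℝ≥0∞ := fun ω => ENNReal.ofReal (U ω) with hoU
  set oP : Ω → ℝ≥0∞ × ℝ≥0∞ := fun ω => (ENNReal.ofReal (A ω), ENNReal.ofReal (B ω)) with hoP
  have hmoU : Measurable oU := ENNReal.measurable_ofReal.comp hU
  have hmoP : Measurable oP :=
    (ENNReal.measurable_ofReal.comp hA).prodMk (ENNReal.measurable_ofReal.comp hB)
  set ν : Measure ℝ≥0∞ := μ.map oU with hνdef
  set lam : Measure (ℝ≥0∞ × ℝ≥0∞) := μ.map oP with hlamdef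
  haveI : IsProbabilityMeasure ν := Measure.isProbabilityMeasure_map hmoU.aemeasurable
  haveI : IsProbabilityMeasure lam := Measure.isProbabilityMeasure_map hmoP.aemeasurable
  have hi : IndepFun oU oP μ := by
    have h := hindep.comp (φ := ENNReal.ofReal)
      (ψ := fun x : ℝ × ℝ => (ENNReal.ofReal x.1, ENNReal.ofReal x.2))
      ENNReal.measurable_ofReal
      ((ENNReal.measurable_ofReal.comp measurable_fst).prodMk
        (ENNReal.measurable_ofReal.comp measurable_snd))
    exact h
  have hjoint : μ.map (fun ω => (oU ω, oP ω)) = ν.prod lam :=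
    (indepFun_iff_map_prod_eq_prod_map_map hmoU.aemeasurable hmoP.aemeasurable).mp hi
  have hgm : Measurable (fun q : ℝ≥0∞ × (ℝ≥0∞ × ℝ≥0∞) => q.2.1 * q.1 + q.2.2) := by fun_prop
  have hfix' : (ν.prod lam).map
      (fun q : ℝ≥0∞ × (ℝ≥0∞ × ℝ≥0∞) => q.2.1 * q.1 + q.2.2) = ν := by
    rw [← hjoint, Measure.map_map hgm (hmoU.prodMk hmoP)]
    have heq : ((fun q : ℝ≥0∞ × (ℝ≥0∞ × ℝ≥0∞) => q.2.1 * q.1 + q.2.2)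
        ∘ fun ω => (oU ω, oP ω))
        = fun ω => ENNReal.ofReal (A ω) * ENNReal.ofReal (U ω) + ENNReal.ofReal (B ω) := rfl
    rw [heq]
    have hae : (fun ω => ENNReal.ofReal (A ω) * ENNReal.ofReal (U ω) + ENNReal.ofReal (B ω))
        =ᵐ[μ] fun ω => ENNReal.ofReal (A ω * U ω + B ω) := by
      filter_upwards [hU0] with ω hω
      rw [ENNReal.ofReal_add (mul_nonneg (hA0 ω) hω) (hB0 ω), ENNReal.ofReal_mul (hA0 ω)]
    calc μ.map (fun ω => ENNReal.ofReal (A ω) * ENNReal.ofReal (U ω) + ENNReal.ofReal (B ω))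
        = μ.map (fun ω => ENNReal.ofReal (A ω * U ω + B ω)) := Measure.map_congr hae
      _ = (μ.map (fun ω => A ω * U ω + B ω)).map ENNReal.ofReal :=
          (Measure.map_map ENNReal.measurable_ofReal ((hA.mul hU).add hB)).symm
      _ = (μ.map U).map ENNReal.ofReal := by rw [← hfix]
      _ = ν := by rw [Measure.map_map ENNReal.measurable_ofReal hU]; rfl
  have hνtop : ν {⊤} = 0 := by
    rw [hνdef, Measure.map_apply hmoU (measurableSet_singleton ⊤)]
    have : oU ⁻¹' {⊤} = ∅ := by
      ext ω
      simp [hoU, ENNReal.ofReal_ne_top]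
    simp [this]
  have hrcalc : ∫⁻ y : ℝ≥0∞ × ℝ≥0∞, y.1 ^ p ∂lam = ENNReal.ofReal (∫ ω, A ω ^ p ∂μ) := by
    rw [hlamdef, lintegral_map (by fun_prop) hmoP]
    have h1 : ∀ ω, ((oP ω).1 : ℝ≥0∞) ^ p = ENNReal.ofReal (A ω ^ p) := fun ω =>
      ENNReal.ofReal_rpow_of_nonneg (hA0 ω) hp.le
    simp_rw [h1]
    exact (ofReal_integral_eq_lintegral_ofReal hrA
      (Filter.Eventually.of_forall fun ω => Real.rpow_nonneg (hA0 ω) p)).symm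
  have hβcalc : ∫⁻ y : ℝ≥0∞ × ℝ≥0∞, y.2 ^ p ∂lam = ENNReal.ofReal (∫ ω, B ω ^ p ∂μ) := by
    rw [hlamdef, lintegral_map (by fun_prop) hmoP]
    have h1 : ∀ ω, ((oP ω).2 : ℝ≥0∞) ^ p = ENNReal.ofReal (B ω ^ p) := fun ω =>
      ENNReal.ofReal_rpow_of_nonneg (hB0 ω) hp.le
    simp_rw [h1]
    exact (ofReal_integral_eq_lintegral_ofReal hrB
      (Filter.Eventually.of_forall fun ω => Real.rpow_nonneg (hB0 ω) p)).symm
  have hr' : ∫⁻ y : ℝ≥0∞ × ℝ≥0∞, y.1 ^ p ∂lam < 1 := by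
    rw [hrcalc]
    exact ENNReal.ofReal_lt_one.2 hrA1
  have hβ' : ∫⁻ y : ℝ≥0∞ × ℝ≥0∞, y.2 ^ p ∂lam ≠ ⊤ := by
    rw [hβcalc]
    exact ENNReal.ofReal_ne_top
  have hfin := moment_lt_top (ν := ν) (lam := lam) hp hfix' hνtop hr' hβ'
  have hUp : ∫⁻ x, x ^ p ∂ν = ∫⁻ ω, ENNReal.ofReal (U ω ^ p) ∂μ := by
    rw [hνdef, lintegral_map (by fun_prop) hmoU]
    apply lintegral_congr_ae
    filter_upwards [hU0] with ω hω
    exact ENNReal.ofReal_rpow_of_nonneg hω hp.le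
  refine ⟨(hU.pow measurable_const).aestronglyMeasurable, ?_⟩
  rw [hasFiniteIntegral_iff_ofReal
    (by filter_upwards [hU0] with ω hω; exact Real.rpow_nonneg hω p)]
  rw [← hUp]
  exact hfin.lt_top

end Glue

/-- Basic consequences of the non-degeneracy conditions:
(i) `E A^p < 1` for `p ∈ (0,κ)`; (ii) `E[A^κ ln A] ∈ (0,+∞]`, the expectation being well
defined since `E[A^κ ln⁻ A] < ∞`; (iii) the solution `U` satisfies `E U^p < ∞` for `p ∈ (0,κ)`. -/
theorem nondegeneracy_consequences
    {Ω : Type*} [MeasurableSpace Ω] (μ : Measure Ω) [IsProbabilityMeasure μ]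
    (A B U : Ω → ℝ) (κ : ℝ)
    (hA : Measurable A) (hB : Measurable B) (hU : Measurable U)
    (hA0 : ∀ ω, 0 ≤ A ω) (hB0 : ∀ ω, 0 ≤ B ω) (hU0 : ∀ᵐ ω ∂μ, 0 ≤ U ω)
    (hκ : 0 < κ)
    (hAne1 : μ {ω | A ω = 1} < 1)
    (hBne0 : μ {ω | B ω = 0} < 1)
    (hAκint : Integrable (fun ω => A ω ^ κ) μ)
    (hAκ : ∫ ω, A ω ^ κ ∂μ = 1)
    (hBκ : Integrable (fun ω => B ω ^ κ) μ)
    (hindep : IndepFun U (fun ω => (A ω, B ω)) μ)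
    (hfix : Measure.map U μ = Measure.map (fun ω => A ω * U ω + B ω) μ) :
    (∀ p : ℝ, p ∈ Set.Ioo 0 κ →
      Integrable (fun ω => A ω ^ p) μ ∧ (∫ ω, A ω ^ p ∂μ) < 1) ∧
    (Integrable (fun ω => A ω ^ κ * max (-Real.log (A ω)) 0) μ ∧
      (¬ Integrable (fun ω => A ω ^ κ * Real.log (A ω)) μ ∨
        0 < ∫ ω, A ω ^ κ * Real.log (A ω) ∂μ)) ∧
    (∀ p : ℝ, p ∈ Set.Ioo 0 κ → Integrable (fun ω => U ω ^ p) μ) := by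
  refine ⟨fun p hp => partI μ A κ hA hA0 hκ hAne1 hAκint hAκ hp,
    ⟨partIIa μ A κ hA hA0 hκ, ?_⟩, fun p hp => ?_⟩
  · by_cases hI : Integrable (fun ω => A ω ^ κ * Real.log (A ω)) μ
    · right
      set c : ℝ := κ / 2 - κ with hc
      have hcneg : c < 0 := by rw [hc]; linarith
      have hmem : (κ / 2) ∈ Set.Ioo 0 κ := ⟨by linarith, by linarith⟩
      obtain ⟨hint2, hlt⟩ := partI μ A κ hA hA0 hκ hAne1 hAκint hAκ hmem
      have hpt : ∀ ω, A ω ^ κ + c * (A ω ^ κ * Real.log (A ω)) ≤ A ω ^ (κ / 2) := fun ω =>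
        pointwise_log_bound (hA0 ω) hκ
      have hmono := integral_mono (hAκint.add (hI.const_mul c)) hint2 hpt
      simp only [Pi.add_apply] at hmono
      rw [integral_add hAκint (hI.const_mul c), integral_const_mul, hAκ] at hmono
      by_contra hneg
      push_neg at hneg
      nlinarith [mul_nonneg (neg_nonneg.2 hcneg.le) (neg_nonneg.2 hneg)]
    · left; exact hI
  · obtain ⟨hAp, hAp1⟩ := partI μ A κ hA hA0 hκ hAne1 hAκint hAκ hp
    have hBp : Integrable (fun ω => B ω ^ p) μ :=
      integrable_rpow_aux hB hB0 hp.1.le hp.2.le hBκ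
    exact partIII μ A B U hA hB hU hA0 hB0 hU0 hindep hfix hp.1 hAp hAp1 hBp
end

section
/- Let Y be a nonnegative random variable such that ℓ(x) = E[Y 1{Y ≤ x}] is a slowly varying function. Then x P(Y > x)/E[Y 1{Y ≤ x}] → 0 as x → ∞; in particular, ℓ₁(x) = E[Y ∧ x] = E[Y 1{Y ≤ x}] + x P(Y > x) satisfies ℓ₁(x)/ℓ(x) → 1 as x → ∞. -/
open MeasureTheory Filter Topology

/-- A measurable function `ℓ` is slowly varying if it is eventually positive and
`ℓ(t x)/ℓ(x) → 1` as `x → ∞` for every `t > 0`. -/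
def SlowlyVarying (f : ℝ → ℝ) : Prop :=
  (∀ᶠ x in Filter.atTop, 0 < f x) ∧
    ∀ t : ℝ, 0 < t → Filter.Tendsto (fun x => f (t * x) / f x) Filter.atTop (nhds 1)

/-- If `ℓ(x) = E[Y 1{Y ≤ x}]` is slowly varying, then `x P(Y > x)/ℓ(x) → 0`;
in particular `E[Y ∧ x] ≍ ℓ(x)`. -/
theorem tail_negligible_of_slowly_varying_truncated_mean
    {Ω : Type*} [MeasurableSpace Ω] (μ : Measure Ω) [IsProbabilityMeasure μ]
    (Y : Ω → ℝ) (ℓ : ℝ → ℝ)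
    (hY : Measurable Y) (hY0 : ∀ ω, 0 ≤ Y ω)
    (hℓdef : ∀ x : ℝ, ℓ x = ∫ ω, (if Y ω ≤ x then Y ω else 0) ∂μ)
    (hℓ : SlowlyVarying ℓ) :
    Filter.Tendsto (fun x : ℝ => x * (μ {ω | x < Y ω}).toReal / ℓ x)
      Filter.atTop (nhds 0) ∧
    Filter.Tendsto (fun x : ℝ => (∫ ω, min (Y ω) x ∂μ) / ℓ x)
      Filter.atTop (nhds 1) := by
  set G : ℝ → ℝ := fun y => (μ {ω | y < Y ω}).toReal with hG
  have hmeas : ∀ y : ℝ, MeasurableSet {ω | y < Y ω} := fun y => hY measurableSet_Ioi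
  have hG0 : ∀ y, 0 ≤ G y := fun y => ENNReal.toReal_nonneg
  -- integrability of truncations
  have hint : ∀ x : ℝ, Integrable (fun ω => if Y ω ≤ x then Y ω else 0) μ := by
    intro x
    have hm : Measurable (fun ω => if Y ω ≤ x then Y ω else 0) :=
      Measurable.ite (measurableSet_le hY measurable_const) hY measurable_const
    refine Integrable.mono' (integrable_const (max x 0)) hm.aestronglyMeasurable ?_
    filter_upwards with ω
    rw [Real.norm_eq_abs]
    split_ifs with h
    · rw [abs_of_nonneg (hY0 ω)]; exact le_max_of_le_left h
    · simp
  -- key inequality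
  have key : ∀ x : ℝ, 0 < x → x * (G x - G (2*x)) ≤ ℓ (2*x) - ℓ x := by
    intro x hx
    set s : Set Ω := Y ⁻¹' Set.Ioc x (2*x) with hs_def
    have hs : MeasurableSet s := hY measurableSet_Ioc
    have hsub : Y ⁻¹' Set.Ioi (2*x) ⊆ Y ⁻¹' Set.Ioi x :=
      Set.preimage_mono (Set.Ioi_subset_Ioi (by linarith))
    have hmeq : (μ s).toReal = G x - G (2*x) := by
      have h1 : s = Y ⁻¹' Set.Ioi x \ Y ⁻¹' Set.Ioi (2*x) := by
        rw [hs_def, ← Set.preimage_diff, Set.Ioi_diff_Ioi]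
      rw [h1, measure_diff hsub (hY measurableSet_Ioi).nullMeasurableSet (measure_ne_top μ _),
        ENNReal.toReal_sub_of_le (measure_mono hsub) (measure_ne_top μ _)]
      rfl
    have hptw : ∀ ω, s.indicator (fun _ => x) ω ≤
        (if Y ω ≤ 2*x then Y ω else 0) - (if Y ω ≤ x then Y ω else 0) := by
      intro ω
      by_cases h1 : Y ω ≤ x
      · have h2 : Y ω ≤ 2*x := by linarith
        have hns : ω ∉ s := by simp [hs_def, Set.mem_Ioc]; intro h; linarith
        simp [Set.indicator_of_notMem hns, h1, h2]
      · push_neg at h1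
        by_cases h2 : Y ω ≤ 2*x
        · have hms : ω ∈ s := by simp [hs_def, Set.mem_Ioc]; exact ⟨h1, h2⟩
          simp only [Set.indicator_of_mem hms, if_pos h2, if_neg (not_le.2 h1)]
          linarith
        · have hns : ω ∉ s := by simp [hs_def, Set.mem_Ioc]; intro h; linarith
          simp [Set.indicator_of_notMem hns, h2, if_neg (not_le.2 h1)]
    have hmono := integral_mono ((integrable_const x).indicator hs)
      ((hint (2*x)).sub (hint x)) hptw
    simp only [Pi.sub_apply] at hmono
    rw [integral_indicator_const x hs, integral_sub (hint (2*x)) (hint x)] at hmono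
    rw [hℓdef (2*x), hℓdef x]
    calc x * (G x - G (2*x)) = (μ s).toReal • x := by rw [hmeq, smul_eq_mul]; ring
    _ ≤ _ := hmono
  -- tail limit for fixed x
  have htail : ∀ x : ℝ, 0 < x →
      Tendsto (fun n : ℕ => G (2^n * x)) atTop (𝓝 0) := by
    intro x hx
    set A : ℕ → Set Ω := fun n => {ω | (2:ℝ)^n * x < Y ω} with hA
    have hanti : Antitone A := by
      intro m n hmn ω hω
      have : (2:ℝ)^m * x ≤ 2^n * x := by
        have := pow_le_pow_right₀ (one_le_two : (1:ℝ) ≤ 2) hmn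
        nlinarith
      exact lt_of_le_of_lt this hω
    have hiInter : ⋂ n, A n = ∅ := by
      apply Set.eq_empty_iff_forall_notMem.2
      intro ω hω
      obtain ⟨n, hn⟩ := pow_unbounded_of_one_lt (Y ω / x) (one_lt_two (α := ℝ))
      have hmem := Set.mem_iInter.1 hω n
      simp only [hA, Set.mem_setOf_eq] at hmem
      rw [div_lt_iff₀ hx] at hn
      linarith
    have h1 : Tendsto (fun n => μ (A n)) atTop (𝓝 0) := by
      have := tendsto_measure_iInter_atTop
        (fun n => (hmeas ((2:ℝ)^n * x)).nullMeasurableSet) hanti ⟨0, measure_ne_top μ _⟩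
      rwa [hiInter, measure_empty] at this
    have := (ENNReal.tendsto_toReal (by simp)).comp h1
    exact this
  -- the main bound
  have main : ∀ ε : ℝ, 0 < ε → ε ≤ 1/2 → ∀ᶠ x in atTop, x * G x ≤ 4*ε*ℓ x := by
    intro ε hε hε2
    have h2 := (hℓ.2 2 two_pos).eventually (eventually_le_nhds (show (1:ℝ) < 1+ε by linarith))
    obtain ⟨x₀, hx₀⟩ := eventually_atTop.1 (hℓ.1.and (h2.and (eventually_ge_atTop 1)))
    filter_upwards [eventually_ge_atTop (max x₀ 1)] with x hx
    have hxx₀ : x₀ ≤ x := le_trans (le_max_left _ _) hx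
    have hx1 : (1:ℝ) ≤ x := le_trans (le_max_right _ _) hx
    have hxpos : 0 < x := by linarith
    -- facts for all y ≥ x₀
    have hfacts : ∀ y : ℝ, x₀ ≤ y → 0 < ℓ y ∧ ℓ (2*y) ≤ (1+ε) * ℓ y := by
      intro y hy
      obtain ⟨hp, hq, -⟩ := hx₀ y hy
      refine ⟨hp, ?_⟩
      have := hq
      rw [div_le_iff₀ hp] at this
      linarith
    have hpow_ge : ∀ k : ℕ, x₀ ≤ 2^k * x := by
      intro k
      have h1 : (1:ℝ) ≤ 2^k := one_le_pow₀ one_le_two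
      nlinarith
    have hℓx : 0 < ℓ x := (hfacts x hxx₀).1
    -- claim1 : growth of ℓ along powers
    have claim1 : ∀ k : ℕ, ℓ (2^k * x) ≤ (1+ε)^k * ℓ x := by
      intro k
      induction k with
      | zero => simp
      | succ k ih =>
        have h2k : (0:ℝ) < 2^k * x := by positivity
        have hstep := (hfacts (2^k * x) (hpow_ge k)).2
        have hℓpos : 0 < ℓ (2^k * x) := (hfacts (2^k * x) (hpow_ge k)).1
        have heq : (2:ℝ)^(k+1) * x = 2 * (2^k * x) := by ring
        rw [heq]
        calc ℓ (2 * (2^k * x)) ≤ (1+ε) * ℓ (2^k * x) := hstep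
        _ ≤ (1+ε) * ((1+ε)^k * ℓ x) := by nlinarith
        _ = (1+ε)^(k+1) * ℓ x := by ring
    -- claim2 : telescoping bound
    set r : ℝ := (1+ε)/2 with hr
    have claim2 : ∀ n : ℕ, x * G x ≤ ε * ℓ x * (∑ k ∈ Finset.range n, r^k) + x * G (2^n * x) := by
      intro n
      induction n with
      | zero => simp
      | succ n ih =>
        rw [Finset.sum_range_succ]
        have hy : (0:ℝ) < 2^n * x := by positivity
        have hk := key (2^n * x) hy
        have hstep := (hfacts (2^n * x) (hpow_ge n)).2
        have hc1 := claim1 n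
        -- (2^n x)(G(2^n x) - G(2^{n+1} x)) ≤ ℓ(2·2^n x) - ℓ(2^n x) ≤ ε ℓ(2^n x) ≤ ε (1+ε)^n ℓ x
        have hb : (2^n * x) * (G (2^n * x) - G (2 * (2^n * x))) ≤ ε * (1+ε)^n * ℓ x := by
          have hℓpos : 0 < ℓ (2^n * x) := (hfacts (2^n * x) (hpow_ge n)).1
          nlinarith
        have heq : (2:ℝ)^(n+1) * x = 2 * (2^n * x) := by ring
        rw [heq]
        -- divide hb by 2^n
        have h2n : (0:ℝ) < 2^n := by positivity
        have hb2 : x * (G (2^n * x) - G (2 * (2^n * x))) ≤ ε * ℓ x * r^n := by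
          have hinv : (0:ℝ) ≤ (2^n)⁻¹ := by positivity
          have h := mul_le_mul_of_nonneg_left hb hinv
          calc x * (G (2^n * x) - G (2 * (2^n * x)))
              = (2^n)⁻¹ * ((2^n * x) * (G (2^n * x) - G (2 * (2^n * x)))) := by
                field_simp
          _ ≤ (2^n)⁻¹ * (ε * (1+ε)^n * ℓ x) := h
          _ = ε * ℓ x * r^n := by rw [hr, div_pow]; field_simp
        linarith
    -- geometric sum bound
    have hrsum : ∀ n : ℕ, (∑ k ∈ Finset.range n, r^k) ≤ 4 := by
      intro n
      have hrlt : r ≤ 3/4 := by rw [hr]; linarith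
      have hr0 : 0 ≤ r := by rw [hr]; linarith
      have hr1 : r ≠ 1 := by linarith
      rw [geom_sum_eq hr1]
      have hrn : (0:ℝ) ≤ r^n := by positivity
      rw [div_le_iff_of_neg (by linarith : r - 1 < 0)]
      nlinarith
    have hb : ∀ n : ℕ, x * G x ≤ 4*ε*ℓ x + x * G (2^n * x) := by
      intro n
      have hc2 := claim2 n
      have hsumn := hrsum n
      have hmul := mul_le_mul_of_nonneg_left hsumn (mul_nonneg hε.le hℓx.le)
      linarith
    have hlim : Tendsto (fun n : ℕ => 4*ε*ℓ x + x * G (2^n * x)) atTop (𝓝 (4*ε*ℓ x)) := by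
      have := (htail x hxpos).const_mul x
      simpa using tendsto_const_nhds.add this
    exact ge_of_tendsto' hlim hb
  -- first conclusion
  have hTend1 : Tendsto (fun x : ℝ => x * G x / ℓ x) atTop (𝓝 0) := by
    rw [NormedAddCommGroup.tendsto_nhds_zero]
    intro ε hε
    set δ : ℝ := min (ε/8) (1/2) with hδ
    have hδ0 : 0 < δ := lt_min (by linarith) (by norm_num)
    have hδ2 : δ ≤ 1/2 := min_le_right _ _
    have hδ3 : δ ≤ ε/8 := min_le_left _ _
    filter_upwards [main δ hδ0 hδ2, hℓ.1, eventually_gt_atTop 0] with x hm hp hx0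
    have hnn : 0 ≤ x * G x / ℓ x := div_nonneg (mul_nonneg hx0.le (hG0 x)) hp.le
    rw [Real.norm_eq_abs, abs_of_nonneg hnn]
    have hle : x * G x / ℓ x ≤ 4*δ := by rw [div_le_iff₀ hp]; linarith
    linarith
  -- the min identity
  have hmin : ∀ x : ℝ, ∫ ω, min (Y ω) x ∂μ = ℓ x + x * G x := by
    intro x
    have heq : (fun ω => min (Y ω) x) = fun ω =>
        (if Y ω ≤ x then Y ω else 0) + {ω | x < Y ω}.indicator (fun _ => x) ω := by
      funext ω
      by_cases h : Y ω ≤ x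
      · have hns : ω ∉ {ω | x < Y ω} := by simp [not_lt.2 h]
        simp [min_eq_left h, h, Set.indicator_of_notMem hns]
      · push_neg at h
        have hms : ω ∈ {ω | x < Y ω} := h
        simp [min_eq_right h.le, if_neg (not_le.2 h), Set.indicator_of_mem hms]
    rw [heq, integral_add (hint x) ((integrable_const x).indicator (hmeas x)),
      integral_indicator_const x (hmeas x), hℓdef, smul_eq_mul]
    simp only [hG, measureReal_def]
    ring
  refine ⟨hTend1, ?_⟩
  have h1 : Tendsto (fun x : ℝ => 1 + x * G x / ℓ x) atTop (𝓝 1) := by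
    simpa using tendsto_const_nhds.add hTend1
  apply h1.congr'
  filter_upwards [hℓ.1] with x hp
  rw [hmin x, add_div, div_self hp.ne']
end

section
/- Let {X_{n,k} : k = 1,…,k_n, n ∈ ℕ} be an array of real random variables such that for each n the row X_{n,1},…,X_{n,k_n} is adapted to a filtration F_{n,0} ⊆ F_{n,1} ⊆ … ⊆ F_{n,k_n}. Fix θ ∈ ℝ and define the conditional characteristic functions φ_{n,k}(θ) = E(e^{iθ X_{n,k}} | F_{n,k−1}) and the product φ_n(θ) = φ_{n,1}(θ) φ_{n,2}(θ) ⋯ φ_{n,k_n}(θ). If φ_n(θ) converges in probability to a (deterministic) constant C(θ) ≠ 0, then E[e^{iθ (X_{n,1} + X_{n,2} + … + X_{n,k_n})}] → C(θ) as n → ∞. -/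
open MeasureTheory ProbabilityTheory Filter Topology Complex

section CondexpAux

variable {Ω : Type*} {m m0 : MeasurableSpace Ω} {μ : Measure Ω}

lemma integrable_re_of {g : Ω → ℂ} (hg : Integrable g μ) :
    Integrable (fun ω => (g ω).re) μ := by
  refine Integrable.mono hg (Complex.continuous_re.comp_aestronglyMeasurable hg.1) ?_
  filter_upwards with ω
  simpa using Complex.abs_re_le_norm (g ω)

lemma integrable_im_of {g : Ω → ℂ} (hg : Integrable g μ) :
    Integrable (fun ω => (g ω).im) μ := by
  refine Integrable.mono hg (Complex.continuous_im.comp_aestronglyMeasurable hg.1) ?_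
  filter_upwards with ω
  simpa using Complex.abs_im_le_norm (g ω)

lemma condexp_re' (hm : m ≤ m0) [SigmaFinite (μ.trim hm)] {g : Ω → ℂ}
    (hg : Integrable g μ) :
    (fun ω => ((μ[g|m]) ω).re) =ᵐ[μ] μ[fun ω => (g ω).re|m] := by
  refine ae_eq_condExp_of_forall_setIntegral_eq hm (integrable_re_of hg) ?_ ?_ ?_
  · exact fun s _ _ => (integrable_re_of integrable_condExp).integrableOn
  · intro s hs hμs
    have h1 := integral_re (𝕜 := ℂ) (μ := μ.restrict s) (f := μ[g|m])
      integrable_condExp.integrableOn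
    have h2 := integral_re (𝕜 := ℂ) (μ := μ.restrict s) (f := g) hg.integrableOn
    simp only [RCLike.re_to_complex] at h1 h2
    rw [h1, h2, setIntegral_condExp hm hg hs]
  · exact (Complex.continuous_re.comp_stronglyMeasurable
      stronglyMeasurable_condExp).aestronglyMeasurable

lemma condexp_im' (hm : m ≤ m0) [SigmaFinite (μ.trim hm)] {g : Ω → ℂ}
    (hg : Integrable g μ) :
    (fun ω => ((μ[g|m]) ω).im) =ᵐ[μ] μ[fun ω => (g ω).im|m] := by
  refine ae_eq_condExp_of_forall_setIntegral_eq hm (integrable_im_of hg) ?_ ?_ ?_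
  · exact fun s _ _ => (integrable_im_of integrable_condExp).integrableOn
  · intro s hs hμs
    have h1 := integral_im (𝕜 := ℂ) (μ := μ.restrict s) (f := μ[g|m])
      integrable_condExp.integrableOn
    have h2 := integral_im (𝕜 := ℂ) (μ := μ.restrict s) (f := g) hg.integrableOn
    simp only [RCLike.im_to_complex] at h1 h2
    rw [h1, h2, setIntegral_condExp hm hg hs]
  · exact (Complex.continuous_im.comp_stronglyMeasurable
      stronglyMeasurable_condExp).aestronglyMeasurable

/-- Pull-out property of the conditional expectation for bounded complex functions. -/
lemma condexp_complex_mul (hm : m ≤ m0) [IsFiniteMeasure μ] {f g : Ω → ℂ}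
    (hf : StronglyMeasurable[m] f) {b : ℝ} (hfb : ∀ ω, ‖f ω‖ ≤ b)
    (hg : Integrable g μ) :
    μ[fun ω => f ω * g ω|m] =ᵐ[μ] fun ω => f ω * (μ[g|m]) ω := by
  have hfm0 : AEStronglyMeasurable f μ := (hf.mono hm).aestronglyMeasurable
  have hfg : Integrable (fun ω => f ω * g ω) μ := Integrable.bdd_mul hg hfm0 (Eventually.of_forall hfb)
  have smr : StronglyMeasurable[m] (fun ω => (f ω).re) :=
    Complex.continuous_re.comp_stronglyMeasurable hf
  have smi : StronglyMeasurable[m] (fun ω => (f ω).im) :=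
    Complex.continuous_im.comp_stronglyMeasurable hf
  have hbr : ∃ c : ℝ, ∀ ω, ‖(f ω).re‖ ≤ c :=
    ⟨b, fun ω => le_trans (by simpa using Complex.abs_re_le_norm (f ω)) (hfb ω)⟩
  have hbi : ∃ c : ℝ, ∀ ω, ‖(f ω).im‖ ≤ c :=
    ⟨b, fun ω => le_trans (by simpa using Complex.abs_im_le_norm (f ω)) (hfb ω)⟩
  have hgr : Integrable (fun ω => (g ω).re) μ := integrable_re_of hg
  have hgi : Integrable (fun ω => (g ω).im) μ := integrable_im_of hg
  have hrr : Integrable (fun ω => (f ω).re * (g ω).re) μ :=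
    Integrable.bdd_mul hgr (smr.mono hm).aestronglyMeasurable (Eventually.of_forall hbr.choose_spec)
  have hii : Integrable (fun ω => (f ω).im * (g ω).im) μ :=
    Integrable.bdd_mul hgi (smi.mono hm).aestronglyMeasurable (Eventually.of_forall hbi.choose_spec)
  have hri : Integrable (fun ω => (f ω).re * (g ω).im) μ :=
    Integrable.bdd_mul hgi (smr.mono hm).aestronglyMeasurable (Eventually.of_forall hbr.choose_spec)
  have hir : Integrable (fun ω => (f ω).im * (g ω).re) μ :=
    Integrable.bdd_mul hgr (smi.mono hm).aestronglyMeasurable (Eventually.of_forall hbi.choose_spec)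
  have prr : μ[fun ω => (f ω).re * (g ω).re|m] =ᵐ[μ]
      fun ω => (f ω).re * (μ[fun ω' => (g ω').re|m]) ω :=
    condExp_mul_of_stronglyMeasurable_left smr hrr hgr
  have pii : μ[fun ω => (f ω).im * (g ω).im|m] =ᵐ[μ]
      fun ω => (f ω).im * (μ[fun ω' => (g ω').im|m]) ω :=
    condExp_mul_of_stronglyMeasurable_left smi hii hgi
  have pri : μ[fun ω => (f ω).re * (g ω).im|m] =ᵐ[μ]
      fun ω => (f ω).re * (μ[fun ω' => (g ω').im|m]) ω :=
    condExp_mul_of_stronglyMeasurable_left smr hri hgi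
  have pir : μ[fun ω => (f ω).im * (g ω).re|m] =ᵐ[μ]
      fun ω => (f ω).im * (μ[fun ω' => (g ω').re|m]) ω :=
    condExp_mul_of_stronglyMeasurable_left smi hir hgr
  have hre1 : (fun ω => ((μ[fun ω' => f ω' * g ω'|m]) ω).re) =ᵐ[μ]
      μ[fun ω => (f ω * g ω).re|m] := condexp_re' hm hfg
  have hre2 : μ[fun ω => (f ω * g ω).re|m] =ᵐ[μ]
      μ[fun ω => (f ω).re * (g ω).re|m] - μ[fun ω => (f ω).im * (g ω).im|m] := by
    have : (fun ω => (f ω * g ω).re)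
        = fun ω => (f ω).re * (g ω).re - (f ω).im * (g ω).im :=
      funext fun ω => Complex.mul_re _ _
    rw [this]
    exact condExp_sub hrr hii m
  have him1 : (fun ω => ((μ[fun ω' => f ω' * g ω'|m]) ω).im) =ᵐ[μ]
      μ[fun ω => (f ω * g ω).im|m] := condexp_im' hm hfg
  have him2 : μ[fun ω => (f ω * g ω).im|m] =ᵐ[μ]
      μ[fun ω => (f ω).re * (g ω).im|m] + μ[fun ω => (f ω).im * (g ω).re|m] := by
    have : (fun ω => (f ω * g ω).im)
        = fun ω => (f ω).re * (g ω).im + (f ω).im * (g ω).re :=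
      funext fun ω => Complex.mul_im _ _
    rw [this]
    exact condExp_add hri hir m
  have hcr : (fun ω => ((μ[g|m]) ω).re) =ᵐ[μ] μ[fun ω => (g ω).re|m] := condexp_re' hm hg
  have hci : (fun ω => ((μ[g|m]) ω).im) =ᵐ[μ] μ[fun ω => (g ω).im|m] := condexp_im' hm hg
  filter_upwards [hre1, hre2, him1, him2, prr, pii, pri, pir, hcr, hci] with ω
    e1 e2 e3 e4 q1 q2 q3 q4 c1 c2
  apply Complex.ext
  · rw [e1, e2]
    simp only [Pi.sub_apply]
    rw [q1, q2, Complex.mul_re, ← c1, ← c2]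
  · rw [e3, e4]
    simp only [Pi.add_apply]
    rw [q3, q4, Complex.mul_im, ← c1, ← c2]

/-- The conditional expectation of a function a.e. bounded by `1` in norm is itself
a.e. bounded by `1` in norm. -/
lemma ae_norm_condexp_le_one (hm : m ≤ m0) [IsFiniteMeasure μ] {f : Ω → ℂ}
    (hfi : Integrable f μ) (hb : ∀ᵐ ω ∂μ, ‖f ω‖ ≤ 1) :
    ∀ᵐ ω ∂μ, ‖(μ[f|m]) ω‖ ≤ 1 := by
  have key : ∀ q : ℚ, ∀ᵐ ω ∂μ, (Complex.exp ((q : ℝ) * I) * (μ[f|m]) ω).re ≤ 1 := by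
    intro q
    have hc : ‖Complex.exp ((q : ℝ) * I)‖ = 1 := by
      simp [Complex.norm_exp]
    have h1 : μ[fun ω => Complex.exp ((q : ℝ) * I) * f ω|m] =ᵐ[μ]
        fun ω => Complex.exp ((q : ℝ) * I) * (μ[f|m]) ω :=
      condexp_complex_mul hm stronglyMeasurable_const (fun _ => le_of_eq hc) hfi
    have h2 : (fun ω => ((μ[fun ω' => Complex.exp ((q : ℝ) * I) * f ω'|m]) ω).re) =ᵐ[μ]
        μ[fun ω => (Complex.exp ((q : ℝ) * I) * f ω).re|m] :=
      condexp_re' hm (hfi.const_mul _)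
    have h3 : μ[fun ω => (Complex.exp ((q : ℝ) * I) * f ω).re|m] ≤ᵐ[μ]
        μ[fun _ => (1 : ℝ)|m] := by
      refine condExp_mono ?_ (integrable_const 1) ?_
      · refine Integrable.mono (g := fun ω => Complex.exp ((q : ℝ) * I) * f ω)
          (hfi.const_mul _)
          (Complex.continuous_re.comp_aestronglyMeasurable ((hfi.const_mul _).1)) ?_
        filter_upwards with ω
        simpa using Complex.abs_re_le_norm (Complex.exp ((q : ℝ) * I) * f ω)
      · filter_upwards [hb] with ω hω
        calc (Complex.exp ((q : ℝ) * I) * f ω).re ≤ ‖Complex.exp ((q : ℝ) * I) * f ω‖ :=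
              Complex.re_le_norm _
          _ = ‖f ω‖ := by rw [norm_mul, hc, one_mul]
          _ ≤ 1 := hω
    have h4 : μ[fun _ : Ω => (1 : ℝ)|m] = fun _ => (1 : ℝ) := condExp_const hm 1
    filter_upwards [h1, h2, h3] with ω e1 e2 e3
    rw [← e1, e2]
    calc (μ[fun ω => (Complex.exp ((q : ℝ) * I) * f ω).re|m]) ω
        ≤ (μ[fun _ : Ω => (1 : ℝ)|m]) ω := e3
      _ = 1 := by rw [h4]
  have hall : ∀ᵐ ω ∂μ, ∀ q : ℚ, (Complex.exp ((q : ℝ) * I) * (μ[f|m]) ω).re ≤ 1 :=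
    (ae_all_iff).2 key
  filter_upwards [hall] with ω hω
  by_contra hlt
  push_neg at hlt
  set z := (μ[f|m]) ω with hz
  have hz0 : z ≠ 0 := by
    intro h
    rw [h] at hlt
    norm_num at hlt
  have hcont : Continuous fun r : ℝ => (Complex.exp ((r : ℝ) * I) * z).re :=
    Complex.continuous_re.comp
      ((Complex.continuous_exp.comp (Complex.continuous_ofReal.mul continuous_const)).mul
        continuous_const)
  have hval : (Complex.exp (((-Complex.arg z : ℝ) : ℝ) * I) * z).re = ‖z‖ := by
    set a := Complex.arg z with ha
    set r := ‖z‖ with hrr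
    have h : z = (r : ℂ) * Complex.exp ((a : ℂ) * I) := (Complex.norm_mul_exp_arg_mul_I z).symm
    rw [h, mul_comm (Complex.exp _) _, mul_assoc, ← Complex.exp_add]
    have h2 : (a : ℂ) * I + ((-a : ℝ) : ℂ) * I = 0 := by push_cast; ring
    rw [h2, Complex.exp_zero, mul_one, Complex.ofReal_re]
  have hopen : IsOpen {r : ℝ | 1 < (Complex.exp ((r : ℝ) * I) * z).re} :=
    isOpen_lt continuous_const hcont
  have hne : {r : ℝ | 1 < (Complex.exp ((r : ℝ) * I) * z).re}.Nonempty := by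
    refine ⟨-Complex.arg z, ?_⟩
    simp only [Set.mem_setOf_eq, hval]
    exact hlt
  obtain ⟨q, hq⟩ := (Rat.denseRange_cast (𝕜 := ℝ)).exists_mem_open hopen hne
  exact absurd (hω q) (not_le.2 hq)

end CondexpAux

namespace PoCaux

variable {Ω : Type*} {m0 : MeasurableSpace Ω}

/-- The conditional characteristic function of the `i`-th variable. -/
noncomputable def cf (μ : Measure Ω) (X : ℕ → Ω → ℝ) (F : ℕ → MeasurableSpace Ω)
    (θ : ℝ) (i : ℕ) : Ω → ℂ :=
  μ[fun ω' => Complex.exp (Complex.I * (θ * X i ω'))|F (i - 1)]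

/-- The product of the conditional characteristic functions up to index `j`. -/
noncomputable def pphi (μ : Measure Ω) (X : ℕ → Ω → ℝ) (F : ℕ → MeasurableSpace Ω)
    (θ : ℝ) (j : ℕ) (ω : Ω) : ℂ :=
  ∏ i ∈ Finset.Icc 1 j, cf μ X F θ i ω

/-- The complex exponential of the partial sum up to index `j`. -/
noncomputable def eS (X : ℕ → Ω → ℝ) (θ : ℝ) (j : ℕ) (ω : Ω) : ℂ :=
  Complex.exp (Complex.I * (θ * ∑ i ∈ Finset.Icc 1 j, X i ω))

/-- The set where all partial products up to `j` have norm at least `ε`. -/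
def setA (μ : Measure Ω) (X : ℕ → Ω → ℝ) (F : ℕ → MeasurableSpace Ω)
    (θ ε : ℝ) (j : ℕ) : Set Ω :=
  {ω | ∀ i ≤ j, ε ≤ ‖pphi μ X F θ i ω‖}

/-- The stopped "martingale" `exp(iθS_j)/Π_j` cut off outside `setA j`. -/
noncomputable def MM (μ : Measure Ω) (X : ℕ → Ω → ℝ) (F : ℕ → MeasurableSpace Ω)
    (θ ε : ℝ) (j : ℕ) : Ω → ℂ :=
  (setA μ X F θ ε j).indicator fun ω => eS X θ j ω / pphi μ X F θ j ω

variable {μ : Measure Ω} {X : ℕ → Ω → ℝ} {F : ℕ → MeasurableSpace Ω} {θ ε : ℝ} {K : ℕ}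

lemma norm_exp_I_mul_real (r s : ℝ) : ‖Complex.exp (Complex.I * (r * s))‖ = 1 := by
  rw [Complex.norm_exp]
  simp

lemma norm_eS (j : ℕ) (ω : Ω) : ‖eS X θ j ω‖ = 1 := norm_exp_I_mul_real _ _

lemma measurable_exp_comp {θ : ℝ} {mΩ : MeasurableSpace Ω} {f : Ω → ℝ}
    (hf : Measurable[mΩ] f) :
    Measurable[mΩ] fun ω => Complex.exp (Complex.I * (θ * f ω)) :=
  Complex.measurable_exp.comp
    (measurable_const.mul ((Complex.measurable_ofReal.comp hf).const_mul (θ : ℂ)))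

lemma integrable_exp_comp [IsProbabilityMeasure μ] {f : Ω → ℝ} (hf : Measurable f) :
    Integrable (fun ω => Complex.exp (Complex.I * (θ * f ω))) μ := by
  refine Integrable.mono' (integrable_const 1)
    (measurable_exp_comp hf).aestronglyMeasurable ?_
  filter_upwards with ω
  exact le_of_eq (norm_exp_I_mul_real _ _)

lemma meas_X (hFle : ∀ i, F i ≤ m0) (hadapted : ∀ i, 1 ≤ i → i ≤ K → Measurable[F i] (X i))
    {i : ℕ} (h1 : 1 ≤ i) (h2 : i ≤ K) : Measurable (X i) :=
  (hadapted i h1 h2).mono (hFle i) le_rfl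

lemma sm_cf (i : ℕ) : StronglyMeasurable[F (i - 1)] (cf μ X F θ i) :=
  stronglyMeasurable_condExp

lemma sm_pphi (hFmono : Monotone F) (j : ℕ) :
    StronglyMeasurable[F (j - 1)] (fun ω => pphi μ X F θ j ω) := by
  unfold pphi
  refine Finset.stronglyMeasurable_fun_prod _ fun i hi => ?_
  rw [Finset.mem_Icc] at hi
  exact (sm_cf i).mono (hFmono (Nat.sub_le_sub_right hi.2 1))

lemma meas_sum (hFmono : Monotone F) (hadapted : ∀ i, 1 ≤ i → i ≤ K → Measurable[F i] (X i))
    {j l : ℕ} (hj : j ≤ l) (hjK : j ≤ K) :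
    Measurable[F l] fun ω => ∑ i ∈ Finset.Icc 1 j, X i ω := by
  refine Finset.measurable_sum _ fun i hi => ?_
  rw [Finset.mem_Icc] at hi
  exact (hadapted i hi.1 (hi.2.trans hjK)).mono (hFmono (hi.2.trans hj)) le_rfl

lemma measurableSet_setA (hFmono : Monotone F) (j : ℕ) :
    MeasurableSet[F (j - 1)] (setA μ X F θ ε j) := by
  have h : setA μ X F θ ε j = ⋂ i, ⋂ (_ : i ≤ j), {ω | ε ≤ ‖pphi μ X F θ i ω‖} := by
    ext ω; simp [setA]
  rw [h]
  refine MeasurableSet.iInter fun i => MeasurableSet.iInter fun hi => ?_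
  have hn : Measurable[F (j - 1)] (fun ω => ‖pphi μ X F θ i ω‖) := by
    have hsm : StronglyMeasurable[F (j - 1)] (fun ω => pphi μ X F θ i ω) :=
      (sm_pphi hFmono i).mono (hFmono (Nat.sub_le_sub_right hi 1))
    exact measurable_norm.comp hsm.measurable
  exact hn measurableSet_Ici

lemma setA_antitone {j₁ j₂ : ℕ} (h : j₁ ≤ j₂) : setA μ X F θ ε j₂ ⊆ setA μ X F θ ε j₁ :=
  fun ω hω i hi => hω i (hi.trans h)

lemma pphi_zero (ω : Ω) : pphi μ X F θ 0 ω = 1 := by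
  simp [pphi]

lemma pphi_succ {j : ℕ} (hj : 1 ≤ j) (ω : Ω) :
    pphi μ X F θ j ω = pphi μ X F θ (j - 1) ω * cf μ X F θ j ω := by
  unfold pphi
  rw [(show Finset.Icc 1 j = Finset.Ioc 0 j from Finset.Icc_add_one_left_eq_Ioc 0 j),
    (show Finset.Icc 1 (j - 1) = Finset.Ioc 0 (j - 1) from Finset.Icc_add_one_left_eq_Ioc 0 (j - 1))]
  have h := Finset.prod_Ioc_succ_top (Nat.zero_le (j - 1)) (fun i => cf μ X F θ i ω)
  rwa [Nat.sub_add_cancel hj] at h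

lemma norm_pphi_anti {ω : Ω} (h : ∀ i, 1 ≤ i → i ≤ K → ‖cf μ X F θ i ω‖ ≤ 1)
    {j₁ j₂ : ℕ} (h12 : j₁ ≤ j₂) (h2K : j₂ ≤ K) :
    ‖pphi μ X F θ j₂ ω‖ ≤ ‖pphi μ X F θ j₁ ω‖ := by
  have hsplit : pphi μ X F θ j₂ ω
      = pphi μ X F θ j₁ ω * ∏ i ∈ Finset.Ioc j₁ j₂, cf μ X F θ i ω := by
    unfold pphi
    rw [(show Finset.Icc 1 j₂ = Finset.Ioc 0 j₂ from Finset.Icc_add_one_left_eq_Ioc 0 j₂),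
      (show Finset.Icc 1 j₁ = Finset.Ioc 0 j₁ from Finset.Icc_add_one_left_eq_Ioc 0 j₁),
      Finset.prod_Ioc_consecutive (fun i => cf μ X F θ i ω) (Nat.zero_le _) h12]
  rw [hsplit, norm_mul]
  have hle : ‖∏ i ∈ Finset.Ioc j₁ j₂, cf μ X F θ i ω‖ ≤ 1 := by
    rw [norm_prod]
    refine Finset.prod_le_one (fun i _ => norm_nonneg _) (fun i hi => ?_)
    rw [Finset.mem_Ioc] at hi
    exact h i (by omega) (hi.2.trans h2K)
  calc ‖pphi μ X F θ j₁ ω‖ * ‖∏ i ∈ Finset.Ioc j₁ j₂, cf μ X F θ i ω‖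
      ≤ ‖pphi μ X F θ j₁ ω‖ * 1 := mul_le_mul_of_nonneg_left hle (norm_nonneg _)
    _ = ‖pphi μ X F θ j₁ ω‖ := mul_one _

lemma norm_pphi_le_one {ω : Ω} (h : ∀ i, 1 ≤ i → i ≤ K → ‖cf μ X F θ i ω‖ ≤ 1)
    {j : ℕ} (hj : j ≤ K) : ‖pphi μ X F θ j ω‖ ≤ 1 := by
  have h2 := norm_pphi_anti h (Nat.zero_le j) hj
  rwa [pphi_zero, norm_one] at h2

lemma sum_succ {j : ℕ} (hj : 1 ≤ j) (ω : Ω) :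
    ∑ i ∈ Finset.Icc 1 j, X i ω = (∑ i ∈ Finset.Icc 1 (j - 1), X i ω) + X j ω := by
  rw [(show Finset.Icc 1 j = Finset.Ioc 0 j from Finset.Icc_add_one_left_eq_Ioc 0 j),
    (show Finset.Icc 1 (j - 1) = Finset.Ioc 0 (j - 1) from Finset.Icc_add_one_left_eq_Ioc 0 (j - 1))]
  have h := Finset.sum_Ioc_succ_top (Nat.zero_le (j - 1)) (fun i => X i ω)
  rwa [Nat.sub_add_cancel hj] at h

lemma eS_succ {j : ℕ} (hj : 1 ≤ j) (ω : Ω) :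
    eS X θ j ω = eS X θ (j - 1) ω * Complex.exp (Complex.I * (θ * X j ω)) := by
  unfold eS
  rw [← Complex.exp_add]
  congr 1
  rw [sum_succ hj ω]
  push_cast
  ring

lemma meas_ratio (hFle : ∀ i, F i ≤ m0) (hFmono : Monotone F)
    (hadapted : ∀ i, 1 ≤ i → i ≤ K → Measurable[F i] (X i)) {j : ℕ} (hjK : j ≤ K) :
    Measurable fun ω => eS X θ j ω / pphi μ X F θ j ω := by
  have h1 : Measurable (eS X θ j : Ω → ℂ) := by
    have h := measurable_exp_comp (θ := θ) (meas_sum hFmono hadapted le_rfl hjK)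
    exact h.mono (hFle j) le_rfl
  have h2 : Measurable fun ω => pphi μ X F θ j ω :=
    ((sm_pphi (θ := θ) hFmono j).measurable).mono (hFle (j - 1)) le_rfl
  exact h1.div h2

lemma measurableSet_setA_m0 (hFle : ∀ i, F i ≤ m0) (hFmono : Monotone F) (j : ℕ) :
    MeasurableSet (setA μ X F θ ε j) :=
  hFle (j - 1) _ (measurableSet_setA hFmono j)

lemma integrable_MM [IsProbabilityMeasure μ] (hFle : ∀ i, F i ≤ m0) (hFmono : Monotone F)
    (hadapted : ∀ i, 1 ≤ i → i ≤ K → Measurable[F i] (X i)) (hε : 0 < ε)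
    {j : ℕ} (hjK : j ≤ K) : Integrable (MM μ X F θ ε j) μ := by
  refine Integrable.mono' (integrable_const (1 / ε)) ?_ ?_
  · exact (((meas_ratio hFle hFmono hadapted hjK).indicator
      (measurableSet_setA_m0 hFle hFmono j))).aestronglyMeasurable
  · filter_upwards with ω
    unfold MM
    by_cases h : ω ∈ setA μ X F θ ε j
    · rw [Set.indicator_of_mem h, norm_div, norm_eS]
      exact one_div_le_one_div_of_le hε (h j le_rfl)
    · rw [Set.indicator_of_notMem h, norm_zero]
      positivity

lemma integral_MM_step [IsProbabilityMeasure μ]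
    (hFle : ∀ i, F i ≤ m0) (hFmono : Monotone F)
    (hadapted : ∀ i, 1 ≤ i → i ≤ K → Measurable[F i] (X i))
    (hε : 0 < ε) {j : ℕ} (h1 : 1 ≤ j) (hjK : j ≤ K) :
    ∫ ω, MM μ X F θ ε j ω ∂μ
      = ∫ ω, (setA μ X F θ ε j).indicator
          (fun ω' => eS X θ (j - 1) ω' / pphi μ X F θ (j - 1) ω') ω ∂μ := by
  set g : Ω → ℂ := (setA μ X F θ ε j).indicator
    (fun ω => eS X θ (j - 1) ω / pphi μ X F θ j ω) with hg
  have hjm1K : j - 1 ≤ K := (Nat.sub_le j 1).trans hjK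
  have hgsm : StronglyMeasurable[F (j - 1)] g := by
    have h1' : Measurable[F (j - 1)] (eS X θ (j - 1) : Ω → ℂ) :=
      measurable_exp_comp (θ := θ) (meas_sum hFmono hadapted le_rfl hjm1K)
    have h2' : Measurable[F (j - 1)] fun ω => pphi μ X F θ j ω :=
      (sm_pphi (θ := θ) hFmono j).measurable
    exact (((h1'.div h2').indicator (measurableSet_setA hFmono j))).stronglyMeasurable
  have hgb : ∀ ω, ‖g ω‖ ≤ 1 / ε := by
    intro ω
    rw [hg]
    by_cases h : ω ∈ setA μ X F θ ε j
    · rw [Set.indicator_of_mem h, norm_div, norm_eS]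
      exact one_div_le_one_div_of_le hε (h j le_rfl)
    · rw [Set.indicator_of_notMem h, norm_zero]
      positivity
  have hXj : Measurable (X j) := meas_X hFle hadapted h1 hjK
  have hMMeq : MM μ X F θ ε j = fun ω => g ω * Complex.exp (Complex.I * (θ * X j ω)) := by
    funext ω
    by_cases h : ω ∈ setA μ X F θ ε j
    · rw [MM, Set.indicator_of_mem h, hg, Set.indicator_of_mem h, eS_succ h1 ω,
        div_mul_eq_mul_div]
    · rw [MM, Set.indicator_of_notMem h, hg, Set.indicator_of_notMem h, zero_mul]
  have hpull : μ[MM μ X F θ ε j|F (j - 1)] =ᵐ[μ] fun ω => g ω * cf μ X F θ j ω := by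
    rw [hMMeq]
    exact condexp_complex_mul (hFle (j - 1)) hgsm hgb (integrable_exp_comp hXj)
  have h3 : ∫ ω, MM μ X F θ ε j ω ∂μ = ∫ ω, (μ[MM μ X F θ ε j|F (j - 1)]) ω ∂μ :=
    (integral_condExp (hFle (j - 1))).symm
  rw [h3, integral_congr_ae hpull]
  congr 1
  funext ω
  by_cases h : ω ∈ setA μ X F θ ε j
  · rw [hg, Set.indicator_of_mem h, Set.indicator_of_mem h]
    have hPj : pphi μ X F θ j ω = pphi μ X F θ (j - 1) ω * cf μ X F θ j ω := pphi_succ h1 ω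
    have hPjne : pphi μ X F θ j ω ≠ 0 := by
      intro hzero
      have h' := h j le_rfl
      rw [hzero, norm_zero] at h'
      exact absurd h' (not_le.mpr hε)
    have hcne : cf μ X F θ j ω ≠ 0 := fun hh => hPjne (by rw [hPj, hh, mul_zero])
    have hPne : pphi μ X F θ (j - 1) ω ≠ 0 := fun hh => hPjne (by rw [hPj, hh, zero_mul])
    rw [hPj]
    field_simp
  · rw [hg, Set.indicator_of_notMem h, Set.indicator_of_notMem h, zero_mul]

lemma key_induction [IsProbabilityMeasure μ]
    (hFle : ∀ i, F i ≤ m0) (hFmono : Monotone F)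
    (hadapted : ∀ i, 1 ≤ i → i ≤ K → Measurable[F i] (X i))
    (hε : 0 < ε) (hε1 : ε ≤ 1) :
    ∀ j, j ≤ K →
      ‖(∫ ω, MM μ X F θ ε j ω ∂μ) - 1‖ ≤ (1 / ε) * (μ (setA μ X F θ ε j)ᶜ).toReal := by
  intro j
  induction j with
  | zero =>
    intro _
    have hA0 : setA μ X F θ ε 0 = Set.univ := by
      refine Set.eq_univ_of_forall fun ω i hi => ?_
      rw [Nat.le_zero] at hi
      rw [hi, pphi_zero, norm_one]
      exact hε1
    have hM0 : MM μ X F θ ε 0 = fun _ => (1 : ℂ) := by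
      funext ω
      rw [MM, hA0, Set.indicator_univ, pphi_zero]
      unfold eS
      simp
    rw [hM0]
    simp only [integral_const, measureReal_def, measure_univ, ENNReal.toReal_one, one_smul, sub_self, norm_zero]
    positivity
  | succ j ih =>
    intro hjK
    have hjK' : j ≤ K := (Nat.le_succ j).trans hjK
    have ihj := ih hjK'
    have hstep := integral_MM_step (μ := μ) (θ := θ) (ε := ε) hFle hFmono hadapted hε
      (Nat.le_add_left 1 j) hjK
    simp only [Nat.add_sub_cancel] at hstep
    set D : Set Ω := setA μ X F θ ε j \ setA μ X F θ ε (j + 1) with hD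
    have hsub : setA μ X F θ ε (j + 1) ⊆ setA μ X F θ ε j := setA_antitone (Nat.le_succ j)
    have hdecomp : (fun ω => (setA μ X F θ ε (j + 1)).indicator
        (fun ω' => eS X θ j ω' / pphi μ X F θ j ω') ω)
        = fun ω => MM μ X F θ ε j ω
            - D.indicator (fun ω' => eS X θ j ω' / pphi μ X F θ j ω') ω := by
      funext ω
      by_cases h2 : ω ∈ setA μ X F θ ε (j + 1)
      · have h1 : ω ∈ setA μ X F θ ε j := hsub h2
        have hnd : ω ∉ D := fun hh => hh.2 h2
        rw [Set.indicator_of_mem h2, MM, Set.indicator_of_mem h1, Set.indicator_of_notMem hnd,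
          sub_zero]
      · by_cases h1 : ω ∈ setA μ X F θ ε j
        · have hd : ω ∈ D := ⟨h1, h2⟩
          rw [Set.indicator_of_notMem h2, MM, Set.indicator_of_mem h1, Set.indicator_of_mem hd,
            sub_self]
        · have hnd : ω ∉ D := fun hh => h1 hh.1
          rw [Set.indicator_of_notMem h2, MM, Set.indicator_of_notMem h1,
            Set.indicator_of_notMem hnd, sub_zero]
    have hmeasD : MeasurableSet D :=
      (measurableSet_setA_m0 hFle hFmono j).diff (measurableSet_setA_m0 hFle hFmono (j + 1))
    have hintD : Integrable (fun ω => D.indicator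
        (fun ω' => eS X θ j ω' / pphi μ X F θ j ω') ω) μ := by
      refine Integrable.mono' (integrable_const (1 / ε)) ?_ ?_
      · exact ((meas_ratio hFle hFmono hadapted hjK').indicator hmeasD).aestronglyMeasurable
      · filter_upwards with ω
        by_cases h : ω ∈ D
        · rw [Set.indicator_of_mem h, norm_div, norm_eS]
          exact one_div_le_one_div_of_le hε (h.1 j le_rfl)
        · rw [Set.indicator_of_notMem h, norm_zero]
          positivity
    have hintMM : Integrable (MM μ X F θ ε j) μ := integrable_MM hFle hFmono hadapted hε hjK'
    have hsplit : ∫ ω, MM μ X F θ ε (j + 1) ω ∂μ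
        = (∫ ω, MM μ X F θ ε j ω ∂μ)
          - ∫ ω, D.indicator (fun ω' => eS X θ j ω' / pphi μ X F θ j ω') ω ∂μ := by
      rw [hstep, hdecomp]
      exact integral_sub hintMM hintD
    have hboundD : ‖∫ ω, D.indicator (fun ω' => eS X θ j ω' / pphi μ X F θ j ω') ω ∂μ‖
        ≤ (1 / ε) * (μ D).toReal := by
      rw [integral_indicator hmeasD]
      refine norm_setIntegral_le_of_norm_le_const_ae' (measure_lt_top μ D) ?_
      filter_upwards with ω h
      rw [norm_div, norm_eS]
      exact one_div_le_one_div_of_le hε (h.1 j le_rfl)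
    have hmeascompl : μ (setA μ X F θ ε (j + 1))ᶜ = μ (setA μ X F θ ε j)ᶜ + μ D := by
      have hset : (setA μ X F θ ε (j + 1))ᶜ = (setA μ X F θ ε j)ᶜ ∪ D := by
        ext ω
        simp only [Set.mem_compl_iff, Set.mem_union, hD, Set.mem_diff]
        constructor
        · intro h
          by_cases h1 : ω ∈ setA μ X F θ ε j
          · exact Or.inr ⟨h1, h⟩
          · exact Or.inl h1
        · rintro (h | ⟨_, h⟩)
          · exact fun hh => h (hsub hh)
          · exact h
      rw [hset, measure_union _ hmeasD]
      exact disjoint_compl_left.mono_right Set.diff_subset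
    calc ‖(∫ ω, MM μ X F θ ε (j + 1) ω ∂μ) - 1‖
        = ‖((∫ ω, MM μ X F θ ε j ω ∂μ) - 1)
          - ∫ ω, D.indicator (fun ω' => eS X θ j ω' / pphi μ X F θ j ω') ω ∂μ‖ := by
          rw [hsplit]; congr 1; ring
      _ ≤ ‖(∫ ω, MM μ X F θ ε j ω ∂μ) - 1‖
          + ‖∫ ω, D.indicator (fun ω' => eS X θ j ω' / pphi μ X F θ j ω') ω ∂μ‖ :=
          norm_sub_le _ _
      _ ≤ (1 / ε) * (μ (setA μ X F θ ε j)ᶜ).toReal + (1 / ε) * (μ D).toReal :=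
          add_le_add ihj hboundD
      _ = (1 / ε) * ((μ (setA μ X F θ ε j)ᶜ).toReal + (μ D).toReal) := by ring
      _ = (1 / ε) * (μ (setA μ X F θ ε (j + 1))ᶜ).toReal := by
          rw [hmeascompl, ENNReal.toReal_add (measure_ne_top μ _) (measure_ne_top μ _)]

lemma norm_MM_le (hε : 0 < ε) (j : ℕ) (ω : Ω) : ‖MM μ X F θ ε j ω‖ ≤ 1 / ε := by
  unfold MM
  by_cases h : ω ∈ setA μ X F θ ε j
  · rw [Set.indicator_of_mem h, norm_div, norm_eS]
    exact one_div_le_one_div_of_le hε (h j le_rfl)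
  · rw [Set.indicator_of_notMem h, norm_zero]
    positivity

lemma row_estimate [IsProbabilityMeasure μ]
    (hFle : ∀ i, F i ≤ m0) (hFmono : Monotone F)
    (hadapted : ∀ i, 1 ≤ i → i ≤ K → Measurable[F i] (X i))
    (hε : 0 < ε) (hε1 : ε ≤ 1) (C : ℂ)
    (hPbd : ∀ᵐ ω ∂μ, ‖pphi μ X F θ K ω‖ ≤ 1) :
    ‖(∫ ω, eS X θ K ω ∂μ) - C‖
      ≤ (‖C‖ / ε + 1) * (μ (setA μ X F θ ε K)ᶜ).toReal
        + (1 / ε) * ∫ ω, ‖pphi μ X F θ K ω - C‖ ∂μ := by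
  have hmeasA : MeasurableSet (setA μ X F θ ε K) := measurableSet_setA_m0 hFle hFmono K
  have hmeasE : Measurable (eS X θ K : Ω → ℂ) :=
    (measurable_exp_comp (meas_sum hFmono hadapted le_rfl le_rfl)).mono (hFle K) le_rfl
  have hmeasP : Measurable (fun ω => pphi μ X F θ K ω) :=
    ((sm_pphi (μ := μ) (X := X) (θ := θ) hFmono K).measurable).mono (hFle (K - 1)) le_rfl
  have hintE : Integrable (eS X θ K) μ := by
    refine Integrable.mono' (integrable_const 1) hmeasE.aestronglyMeasurable ?_
    filter_upwards with ω
    exact le_of_eq (norm_eS K ω)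
  have hintP : Integrable (fun ω => pphi μ X F θ K ω) μ :=
    Integrable.mono' (integrable_const 1) hmeasP.aestronglyMeasurable hPbd
  have hintMM : Integrable (MM μ X F θ ε K) μ := integrable_MM hFle hFmono hadapted hε le_rfl
  have hintAce : Integrable ((setA μ X F θ ε K)ᶜ.indicator (eS X θ K)) μ :=
    hintE.indicator hmeasA.compl
  have hintAe : Integrable ((setA μ X F θ ε K).indicator (eS X θ K)) μ :=
    hintE.indicator hmeasA
  have hsplit : ∫ ω, eS X θ K ω ∂μ
      = (∫ ω, (setA μ X F θ ε K).indicator (eS X θ K) ω ∂μ)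
        + ∫ ω, (setA μ X F θ ε K)ᶜ.indicator (eS X θ K) ω ∂μ := by
    rw [← integral_add hintAe hintAce]
    congr 1
    funext ω
    by_cases h : ω ∈ setA μ X F θ ε K
    · rw [Set.indicator_of_mem h, Set.indicator_of_notMem (by simpa using h), add_zero]
    · rw [Set.indicator_of_notMem h, Set.indicator_of_mem (by simpa using h), zero_add]
  have hAe : (setA μ X F θ ε K).indicator (eS X θ K)
      = fun ω => MM μ X F θ ε K ω * pphi μ X F θ K ω := by
    funext ω
    by_cases h : ω ∈ setA μ X F θ ε K
    · rw [Set.indicator_of_mem h, MM, Set.indicator_of_mem h]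
      have hPne : pphi μ X F θ K ω ≠ 0 := by
        intro hzero
        have h' := h K le_rfl
        rw [hzero, norm_zero] at h'
        exact absurd h' (not_le.mpr hε)
      rw [div_mul_cancel₀ _ hPne]
    · rw [Set.indicator_of_notMem h, MM, Set.indicator_of_notMem h, zero_mul]
  have hintMP : Integrable (fun ω => MM μ X F θ ε K ω * (pphi μ X F θ K ω - C)) μ := by
    refine Integrable.mono' ((hintP.sub (integrable_const C)).norm.const_mul (1 / ε))
      ((hintMM.1.mul (hintP.sub (integrable_const C)).1)) ?_
    filter_upwards with ω
    rw [norm_mul]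
    exact mul_le_mul_of_nonneg_right (norm_MM_le hε K ω) (norm_nonneg _)
  have hMP : ∫ ω, MM μ X F θ ε K ω * pphi μ X F θ K ω ∂μ
      = (∫ ω, MM μ X F θ ε K ω * (pphi μ X F θ K ω - C) ∂μ)
        + C * ∫ ω, MM μ X F θ ε K ω ∂μ := by
    have h : (fun ω => MM μ X F θ ε K ω * pphi μ X F θ K ω)
        = fun ω => MM μ X F θ ε K ω * (pphi μ X F θ K ω - C) + C * MM μ X F θ ε K ω := by
      funext ω; ring
    rw [h, integral_add hintMP (hintMM.const_mul C), integral_const_mul]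
  have hb1 : ‖∫ ω, (setA μ X F θ ε K)ᶜ.indicator (eS X θ K) ω ∂μ‖
      ≤ (μ (setA μ X F θ ε K)ᶜ).toReal := by
    rw [integral_indicator hmeasA.compl]
    have h := norm_setIntegral_le_of_norm_le_const_ae' (μ := μ) (s := (setA μ X F θ ε K)ᶜ)
      (f := eS X θ K) (C := 1) (measure_lt_top μ _)
      (by filter_upwards with ω _ ; exact le_of_eq (norm_eS (X := X) (θ := θ) K ω))
    simpa [measureReal_def] using h
  have hb2 : ‖∫ ω, MM μ X F θ ε K ω * (pphi μ X F θ K ω - C) ∂μ‖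
      ≤ (1 / ε) * ∫ ω, ‖pphi μ X F θ K ω - C‖ ∂μ := by
    refine (norm_integral_le_integral_norm _).trans ?_
    rw [← integral_const_mul]
    refine integral_mono hintMP.norm
      (((hintP.sub (integrable_const C)).norm).const_mul (1 / ε)) ?_
    intro ω
    simp only
    rw [norm_mul]
    exact mul_le_mul_of_nonneg_right (norm_MM_le hε K ω) (norm_nonneg _)
  have hb3 : ‖C * ((∫ ω, MM μ X F θ ε K ω ∂μ) - 1)‖
      ≤ ‖C‖ * ((1 / ε) * (μ (setA μ X F θ ε K)ᶜ).toReal) := by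
    rw [norm_mul]
    exact mul_le_mul_of_nonneg_left
      (key_induction hFle hFmono hadapted hε hε1 K le_rfl) (norm_nonneg _)
  have hid : (∫ ω, eS X θ K ω ∂μ) - C
      = (∫ ω, MM μ X F θ ε K ω * (pphi μ X F θ K ω - C) ∂μ)
        + C * ((∫ ω, MM μ X F θ ε K ω ∂μ) - 1)
        + ∫ ω, (setA μ X F θ ε K)ᶜ.indicator (eS X θ K) ω ∂μ := by
    rw [hsplit, hAe, hMP]
    ring
  rw [hid]
  calc ‖(∫ ω, MM μ X F θ ε K ω * (pphi μ X F θ K ω - C) ∂μ)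
        + C * ((∫ ω, MM μ X F θ ε K ω ∂μ) - 1)
        + ∫ ω, (setA μ X F θ ε K)ᶜ.indicator (eS X θ K) ω ∂μ‖
      ≤ ‖(∫ ω, MM μ X F θ ε K ω * (pphi μ X F θ K ω - C) ∂μ)
        + C * ((∫ ω, MM μ X F θ ε K ω ∂μ) - 1)‖
        + ‖∫ ω, (setA μ X F θ ε K)ᶜ.indicator (eS X θ K) ω ∂μ‖ := norm_add_le _ _
    _ ≤ ‖∫ ω, MM μ X F θ ε K ω * (pphi μ X F θ K ω - C) ∂μ‖
        + ‖C * ((∫ ω, MM μ X F θ ε K ω ∂μ) - 1)‖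
        + ‖∫ ω, (setA μ X F θ ε K)ᶜ.indicator (eS X θ K) ω ∂μ‖ :=
        add_le_add_left (norm_add_le _ _) _
    _ ≤ ((1 / ε) * ∫ ω, ‖pphi μ X F θ K ω - C‖ ∂μ)
        + ‖C‖ * ((1 / ε) * (μ (setA μ X F θ ε K)ᶜ).toReal)
        + (μ (setA μ X F θ ε K)ᶜ).toReal := add_le_add (add_le_add hb2 hb3) hb1
    _ = (‖C‖ / ε + 1) * (μ (setA μ X F θ ε K)ᶜ).toReal
        + (1 / ε) * ∫ ω, ‖pphi μ X F θ K ω - C‖ ∂μ := by ring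

lemma cf_good [IsProbabilityMeasure μ] (hFle : ∀ i, F i ≤ m0)
    (hadapted : ∀ i, 1 ≤ i → i ≤ K → Measurable[F i] (X i)) :
    ∀ᵐ ω ∂μ, ∀ i, 1 ≤ i → i ≤ K → ‖cf μ X F θ i ω‖ ≤ 1 := by
  rw [ae_all_iff]
  intro i
  by_cases h : 1 ≤ i ∧ i ≤ K
  · have hint : Integrable (fun ω' => Complex.exp (Complex.I * (θ * X i ω'))) μ :=
      integrable_exp_comp (meas_X hFle hadapted h.1 h.2)
    have hbd := ae_norm_condexp_le_one (hFle (i - 1)) hint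
      (Eventually.of_forall fun ω => le_of_eq (norm_exp_I_mul_real θ (X i ω)))
    filter_upwards [hbd] with ω hω _ _
    exact hω
  · filter_upwards with ω h1 h2
    exact absurd ⟨h1, h2⟩ h

lemma tendsto_integral_norm_sub [IsProbabilityMeasure μ] {f : ℕ → Ω → ℂ} {C : ℂ}
    (hmeas : ∀ n, Measurable (f n)) (hbd : ∀ n, ∀ᵐ ω ∂μ, ‖f n ω‖ ≤ 1)
    (hconv : TendstoInMeasure μ f atTop (fun _ => C)) :
    Tendsto (fun n => ∫ ω, ‖f n ω - C‖ ∂μ) atTop (𝓝 0) := by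
  have hint : ∀ n, Integrable (f n) μ := fun n =>
    Integrable.mono' (integrable_const 1) (hmeas n).aestronglyMeasurable (hbd n)
  rw [Metric.tendsto_atTop]
  intro δ hδ
  have hδ2 : 0 < δ / 2 := by linarith
  have hmeasS : ∀ n, MeasurableSet {ω | δ / 2 ≤ dist (f n ω) C} := fun n =>
    ((hmeas n).dist measurable_const) measurableSet_Ici
  have htend := tendstoInMeasure_iff_dist.mp hconv (δ / 2) hδ2
  have htoReal : Tendsto (fun n => (μ {ω | δ / 2 ≤ dist (f n ω) C}).toReal) atTop (𝓝 0) := by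
    have h := (ENNReal.tendsto_toReal (ENNReal.zero_ne_top)).comp htend
    simpa [Function.comp_def] using h
  have hpos : (0 : ℝ) < δ / (2 * (1 + ‖C‖)) := by positivity
  obtain ⟨N, hN⟩ := (Metric.tendsto_atTop.mp htoReal) (δ / (2 * (1 + ‖C‖))) hpos
  refine ⟨N, fun n hn => ?_⟩
  have hbound : ∫ ω, ‖f n ω - C‖ ∂μ
      ≤ (1 + ‖C‖) * (μ {ω | δ / 2 ≤ dist (f n ω) C}).toReal + δ / 2 := by
    have hintl : Integrable (fun ω => ‖f n ω - C‖) μ := ((hint n).sub (integrable_const C)).norm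
    have hintr : Integrable (fun ω =>
        ({ω | δ / 2 ≤ dist (f n ω) C}.indicator (fun _ => (1 + ‖C‖)) ω) + δ / 2) μ :=
      ((integrable_const (1 + ‖C‖)).indicator (hmeasS n)).add (integrable_const (δ / 2))
    have hle : ∀ᵐ ω ∂μ, ‖f n ω - C‖
        ≤ ({ω | δ / 2 ≤ dist (f n ω) C}.indicator (fun _ => (1 + ‖C‖)) ω) + δ / 2 := by
      filter_upwards [hbd n] with ω hω
      by_cases h : ω ∈ {ω | δ / 2 ≤ dist (f n ω) C}
      · rw [Set.indicator_of_mem h]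
        have h1 : ‖f n ω - C‖ ≤ ‖f n ω‖ + ‖C‖ := norm_sub_le _ _
        have h2 : ‖f n ω‖ + ‖C‖ ≤ 1 + ‖C‖ := by linarith
        linarith
      · rw [Set.indicator_of_notMem h]
        simp only [Set.mem_setOf_eq, not_le] at h
        rw [dist_eq_norm] at h
        linarith
    calc ∫ ω, ‖f n ω - C‖ ∂μ
        ≤ ∫ ω, ({ω | δ / 2 ≤ dist (f n ω) C}.indicator (fun _ => (1 + ‖C‖)) ω) + δ / 2 ∂μ :=
          integral_mono_ae hintl hintr hle
      _ = (1 + ‖C‖) * (μ {ω | δ / 2 ≤ dist (f n ω) C}).toReal + δ / 2 := by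
          rw [integral_add ((integrable_const (1 + ‖C‖)).indicator (hmeasS n))
            (integrable_const (δ / 2)), integral_indicator_const _ (hmeasS n)]
          simp [mul_comm, measureReal_def]
  have hNn := hN n hn
  rw [Real.dist_eq, sub_zero, _root_.abs_of_nonneg ENNReal.toReal_nonneg] at hNn
  rw [Real.dist_eq, sub_zero, _root_.abs_of_nonneg (integral_nonneg fun ω => norm_nonneg _)]
  have h1 : (1 + ‖C‖) * (μ {ω | δ / 2 ≤ dist (f n ω) C}).toReal < δ / 2 := by
    have hCpos : (0 : ℝ) < 1 + ‖C‖ := by positivity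
    calc (1 + ‖C‖) * (μ {ω | δ / 2 ≤ dist (f n ω) C}).toReal
        < (1 + ‖C‖) * (δ / (2 * (1 + ‖C‖))) := mul_lt_mul_of_pos_left hNn hCpos
      _ = δ / 2 := by field_simp
  calc ∫ ω, ‖f n ω - C‖ ∂μ ≤ _ := hbound
    _ < δ / 2 + δ / 2 := by linarith
    _ = δ := by ring

end PoCaux

/-- The Principle of Conditioning: if the product of the row-wise conditional
characteristic functions converges in probability to a nonzero constant `C(θ)`,
then the characteristic function of the row sums converges to `C(θ)`. -/
theorem principle_of_conditioning
    {Ω : Type*} [m0 : MeasurableSpace Ω] (μ : Measure Ω) [IsProbabilityMeasure μ]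
    (k : ℕ → ℕ) (X : ℕ → ℕ → Ω → ℝ) (F : ℕ → ℕ → MeasurableSpace Ω)
    (hFle : ∀ n i, F n i ≤ m0)
    (hFmono : ∀ n, Monotone (F n))
    (hadapted : ∀ n i, 1 ≤ i → i ≤ k n → Measurable[F n i] (X n i))
    (θ : ℝ) (C : ℂ) (hC : C ≠ 0)
    (hconv : TendstoInMeasure μ
      (fun n : ℕ => fun ω : Ω =>
        ∏ i ∈ Finset.Icc 1 (k n),
          (μ[fun ω' => Complex.exp (Complex.I * (θ * X n i ω')) | F n (i - 1)]) ω)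
      Filter.atTop (fun _ => C)) :
    Filter.Tendsto
      (fun n : ℕ =>
        ∫ ω, Complex.exp (Complex.I * (θ * ∑ i ∈ Finset.Icc 1 (k n), X n i ω)) ∂μ)
      Filter.atTop (nhds C) := by
  classical
  set ε : ℝ := min ‖C‖ 1 / 2 with hε_def
  have hC0 : 0 < ‖C‖ := norm_pos_iff.mpr hC
  have hmin : 0 < min ‖C‖ 1 := lt_min hC0 one_pos
  have hε : 0 < ε := by rw [hε_def]; linarith
  have hε1 : ε ≤ 1 := by
    have h := min_le_right ‖C‖ 1
    rw [hε_def]; linarith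
  have hεC : 2 * ε ≤ ‖C‖ := by
    have h := min_le_left ‖C‖ 1
    rw [hε_def]; linarith
  have hgood : ∀ n, ∀ᵐ ω ∂μ, ∀ i, 1 ≤ i → i ≤ k n →
      ‖PoCaux.cf μ (X n) (F n) θ i ω‖ ≤ 1 :=
    fun n => PoCaux.cf_good (hFle n) (fun i h1 h2 => hadapted n i h1 h2)
  have hPmeas : ∀ n, Measurable (fun ω => PoCaux.pphi μ (X n) (F n) θ (k n) ω) := fun n =>
    ((PoCaux.sm_pphi (hFmono n) (k n)).measurable).mono (hFle n (k n - 1)) le_rfl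
  have hPbd : ∀ n, ∀ᵐ ω ∂μ, ‖PoCaux.pphi μ (X n) (F n) θ (k n) ω‖ ≤ 1 := fun n => by
    filter_upwards [hgood n] with ω hω
    exact PoCaux.norm_pphi_le_one hω le_rfl
  have hconv' : TendstoInMeasure μ (fun n ω => PoCaux.pphi μ (X n) (F n) θ (k n) ω)
      atTop (fun _ => C) := hconv
  have hL1 : Tendsto (fun n => ∫ ω, ‖PoCaux.pphi μ (X n) (F n) θ (k n) ω - C‖ ∂μ)
      atTop (𝓝 0) :=
    PoCaux.tendsto_integral_norm_sub hPmeas hPbd hconv'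
  have hAc : ∀ n, μ (PoCaux.setA μ (X n) (F n) θ ε (k n))ᶜ
      ≤ μ {ω | ε ≤ dist (PoCaux.pphi μ (X n) (F n) θ (k n) ω) C} := by
    intro n
    refine measure_mono_ae ?_
    filter_upwards [hgood n] with ω hg
    intro hmem
    have hmem' : ¬ (∀ i ≤ k n, ε ≤ ‖PoCaux.pphi μ (X n) (F n) θ i ω‖) := hmem
    push_neg at hmem'
    obtain ⟨i, hiK, hilt⟩ := hmem'
    have h1 : ‖PoCaux.pphi μ (X n) (F n) θ (k n) ω‖ ≤ ‖PoCaux.pphi μ (X n) (F n) θ i ω‖ :=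
      PoCaux.norm_pphi_anti hg hiK le_rfl
    have h2 : ‖PoCaux.pphi μ (X n) (F n) θ (k n) ω‖ < ε := lt_of_le_of_lt h1 hilt
    show ε ≤ dist _ C
    rw [dist_eq_norm]
    have h3 : ‖C‖ - ‖PoCaux.pphi μ (X n) (F n) θ (k n) ω‖
        ≤ ‖C - PoCaux.pphi μ (X n) (F n) θ (k n) ω‖ := norm_sub_norm_le _ _
    rw [norm_sub_rev] at h3
    linarith
  have hActend : Tendsto (fun n => (μ (PoCaux.setA μ (X n) (F n) θ ε (k n))ᶜ).toReal)
      atTop (𝓝 0) := by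
    have h0 := tendstoInMeasure_iff_dist.mp hconv' ε hε
    have h1 : Tendsto (fun n =>
        (μ {ω | ε ≤ dist (PoCaux.pphi μ (X n) (F n) θ (k n) ω) C}).toReal) atTop (𝓝 0) := by
      have h := (ENNReal.tendsto_toReal (ENNReal.zero_ne_top)).comp h0
      simpa [Function.comp_def] using h
    refine squeeze_zero (fun n => ENNReal.toReal_nonneg) (fun n => ?_) h1
    exact ENNReal.toReal_mono (measure_ne_top μ _) (hAc n)
  have hest : ∀ n, ‖(∫ ω, PoCaux.eS (X n) θ (k n) ω ∂μ) - C‖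
      ≤ (‖C‖ / ε + 1) * (μ (PoCaux.setA μ (X n) (F n) θ ε (k n))ᶜ).toReal
        + (1 / ε) * ∫ ω, ‖PoCaux.pphi μ (X n) (F n) θ (k n) ω - C‖ ∂μ := fun n =>
    PoCaux.row_estimate (hFle n) (hFmono n) (fun i h1 h2 => hadapted n i h1 h2)
      hε hε1 C (hPbd n)
  have hmain : Tendsto (fun n => ∫ ω, PoCaux.eS (X n) θ (k n) ω ∂μ) atTop (𝓝 C) := by
    rw [tendsto_iff_norm_sub_tendsto_zero]
    refine squeeze_zero (fun n => norm_nonneg _) hest ?_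
    have h := (hActend.const_mul (‖C‖ / ε + 1)).add (hL1.const_mul (1 / ε))
    simpa using h
  exact hmain
end
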